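/- arXiv:0804.4533 — 3 statements merged into one kernel-verified Lean document; each statement's English description precedes it below -/
import Mathlib

section
/- Let (X,d_X) be a metric space. If for some n ∈ ℕ there exists a sequence of dilatations fₘ : Bⁿ(0,kₘ) → X with dilatation constants Cₘ ≥ 1, where Bⁿ(0,kₘ) ⊂ ℤⁿ is the ℓ¹-ball of radius kₘ and kₘ → ∞, then asdim_AN(X,d_X) ≥ n. -/
/-- There is an `s`-scale chain inside `U` joining `x` to `y`. -/
def ScaleChain {X : Type*} (d : X → X → ℝ) (s : ℝ) (U : Set X) (x y : X) : Prop :=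
  ∃ (n : ℕ) (c : Fin (n + 1) → X), (∀ i, c i ∈ U) ∧ c 0 = x ∧ c (Fin.last n) = y ∧
    ∀ i : Fin n, d (c i.castSucc) (c i.succ) < s

/-- Asymptotic Assouad-Nagata dimension at most `n`: a linear (affine)
`n`-dimensional control function exists. -/
def ASDimANLe {X : Type*} (d : X → X → ℝ) (n : ℕ) : Prop :=
  ∃ C : ℝ, 0 < C ∧ ∃ k : ℝ, ∀ s : ℝ, 0 < s → ∃ U : Fin (n + 1) → Set X,
    (∀ x, ∃ i, x ∈ U i) ∧ ∀ i, ∀ x y, ScaleChain d s (U i) x y → d x y ≤ C * s + k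



open Finset

namespace AsdimProof

variable {n : ℕ} (N : ℕ) (lab : (Fin n → ℤ) → Fin n × Bool)

/-- indicator of whether direction `i` has been used among the first `κ` steps of `m`. -/
noncomputable def stp {d : ℕ} (m : Fin d → Fin n) (κ : ℕ) (i : Fin n) : ℤ := by
  classical exact if ∃ l : Fin d, (l : ℕ) < κ ∧ m l = i then 1 else 0

/-- vertex number `κ` of the simplex with base `x` and steps `m`. -/
noncomputable def vert {d : ℕ} (x : Fin n → Fin (N + 1)) (m : Fin d → Fin n) (κ : ℕ) :
    Fin n → ℤ := fun i => (x i : ℤ) + stp m κ i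

def OK {d : ℕ} (x : Fin n → Fin (N + 1)) (m : Fin d ↪ Fin n) : Prop :=
  (∀ i, i ∉ Set.range ⇑m → x i = 0) ∧ ∀ l : Fin d, (x (m l) : ℕ) + 1 ≤ N

noncomputable def Lab {d : ℕ} (x : Fin n → Fin (N + 1)) (m : Fin d ↪ Fin n) (k : Fin (d + 1)) :
    Fin n × Bool := lab (vert N x ⇑m k)

noncomputable def Pfin {d : ℕ} (m : Fin d ↪ Fin n) : Finset (Fin n × Bool) :=
  image (fun l => (m l, true)) univ

lemma stp_nonneg {d : ℕ} (m : Fin d → Fin n) (κ : ℕ) (i : Fin n) : 0 ≤ stp m κ i := by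
  classical unfold stp; split_ifs <;> norm_num

lemma stp_le_one {d : ℕ} (m : Fin d → Fin n) (κ : ℕ) (i : Fin n) : stp m κ i ≤ 1 := by
  classical unfold stp; split_ifs <;> norm_num

lemma stp_mono {d : ℕ} (m : Fin d → Fin n) {κ κ' : ℕ} (h : κ ≤ κ') (i : Fin n) :
    stp m κ i ≤ stp m κ' i := by
  classical
  unfold stp
  split_ifs with h1 h2 h2 <;> try norm_num
  · obtain ⟨l, hl, hli⟩ := h1
    exact absurd ⟨l, lt_of_lt_of_le hl h, hli⟩ h2

lemma stp_zero {d : ℕ} (m : Fin d → Fin n) (i : Fin n) : stp m 0 i = 0 := by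
  classical unfold stp; rw [if_neg]; rintro ⟨l, hl, -⟩; omega

lemma stp_eq_zero_of_not_mem {d : ℕ} (m : Fin d → Fin n) (κ : ℕ) {i : Fin n}
    (h : i ∉ Set.range m) : stp m κ i = 0 := by
  classical unfold stp; rw [if_neg]; rintro ⟨l, -, hl⟩; exact h ⟨l, hl⟩

/-- vertices of an OK simplex are in the box. -/
lemma vert_mem_box {d : ℕ} {x : Fin n → Fin (N + 1)} {m : Fin d ↪ Fin n} (hOK : OK N x m)
    (κ : ℕ) (i : Fin n) : 0 ≤ vert N x ⇑m κ i ∧ vert N x ⇑m κ i ≤ N := by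
  classical
  constructor
  · have := stp_nonneg (⇑m) κ i
    have : (0:ℤ) ≤ (x i : ℤ) := Int.natCast_nonneg _
    unfold vert
    have := stp_nonneg (⇑m) κ i
    omega
  · unfold vert
    by_cases hi : i ∈ Set.range ⇑m
    · obtain ⟨l, rfl⟩ := hi
      have h1 := hOK.2 l
      have h2 := stp_le_one (⇑m) κ (m l)
      omega
    · have h1 : (x i : ℕ) = 0 := by rw [hOK.1 i hi]; rfl
      have h2 : stp (⇑m) κ i = 0 := stp_eq_zero_of_not_mem _ _ hi
      rw [h2]
      omega

/-- two vertices of a simplex are comparable within 1. -/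
lemma vert_comparable {d : ℕ} (x : Fin n → Fin (N + 1)) (m : Fin d → Fin n) {κ κ' : ℕ}
    (h : κ ≤ κ') (i : Fin n) :
    vert N x m κ i ≤ vert N x m κ' i ∧ vert N x m κ' i ≤ vert N x m κ i + 1 := by
  have h1 := stp_mono m h i
  have h2 := stp_nonneg m κ i
  have h3 := stp_le_one m κ' i
  unfold vert
  omega

lemma Pfin_card {d : ℕ} (m : Fin d ↪ Fin n) : (Pfin m).card = d := by
  rw [Pfin, card_image_of_injective _ (fun a b hab => m.injective (congrArg Prod.fst hab))]
  simp

lemma mem_Pfin {d : ℕ} {m : Fin d ↪ Fin n} {p : Fin n × Bool} :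
    p ∈ Pfin m ↔ ∃ l, (m l, true) = p := by
  simp [Pfin]

lemma mem_Pfin' {d : ℕ} {m : Fin d ↪ Fin n} {j : Fin n} :
    (j, true) ∈ Pfin m ↔ j ∈ Set.range ⇑m := by
  rw [mem_Pfin]
  constructor
  · rintro ⟨l, hl⟩; exact ⟨l, congrArg Prod.fst hl⟩
  · rintro ⟨l, rfl⟩; exact ⟨l, rfl⟩

/-- decomposition of the image over all of `Fin (d+1)` through a distinguished index. -/
lemma image_eq_insert_succAbove {d : ℕ} {β : Type*} [DecidableEq β] (g : Fin (d + 1) → β)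
    (k : Fin (d + 1)) :
    image g univ = insert (g k) (image (fun l => g (k.succAbove l)) univ) := by
  ext b
  simp only [mem_image, mem_univ, true_and, mem_insert]
  constructor
  · rintro ⟨a, rfl⟩
    rcases eq_or_ne a k with rfl | hak
    · exact Or.inl rfl
    · obtain ⟨l, rfl⟩ := Fin.exists_succAbove_eq hak
      exact Or.inr ⟨l, rfl⟩
  · rintro (rfl | ⟨l, rfl⟩)
    · exact ⟨k, rfl⟩
    · exact ⟨k.succAbove l, rfl⟩

end AsdimProof

namespace AsdimProof

open Finset

variable {n : ℕ} {N : ℕ}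

lemma stp_congr {d d' : ℕ} {m : Fin d → Fin n} {m' : Fin d' → Fin n} {κ κ' : ℕ} {i i' : Fin n}
    (h : (∃ l : Fin d, (l : ℕ) < κ ∧ m l = i) ↔ (∃ l : Fin d', (l : ℕ) < κ' ∧ m' l = i')) :
    stp m κ i = stp m' κ' i' := by
  classical
  unfold stp
  exact if_congr h rfl rfl

lemma stp_eq_one {d : ℕ} {m : Fin d → Fin n} {κ : ℕ} {i : Fin n}
    (h : ∃ l : Fin d, (l : ℕ) < κ ∧ m l = i) : stp m κ i = 1 := by
  classical unfold stp; exact if_pos h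

lemma stp_eq_zero {d : ℕ} {m : Fin d → Fin n} {κ : ℕ} {i : Fin n}
    (h : ¬ ∃ l : Fin d, (l : ℕ) < κ ∧ m l = i) : stp m κ i = 0 := by
  classical unfold stp; exact if_neg h

/-! ### operations on simplices -/

def rotl {d : ℕ} (m : Fin (d + 1) ↪ Fin n) : Fin (d + 1) ↪ Fin n :=
  (finRotate (d + 1)).toEmbedding.trans m

def rotr {d : ℕ} (m : Fin (d + 1) ↪ Fin n) : Fin (d + 1) ↪ Fin n :=
  (finRotate (d + 1)).symm.toEmbedding.trans m

def swapIdx {d : ℕ} (k : Fin (d + 2)) : Equiv.Perm (Fin (d + 1)) :=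
  Equiv.swap ⟨(k : ℕ) - 1, by have := k.isLt; omega⟩
    ⟨min (k : ℕ) d, Nat.lt_succ_of_le (Nat.min_le_right _ _)⟩

def swapm {d : ℕ} (m : Fin (d + 1) ↪ Fin n) (k : Fin (d + 2)) : Fin (d + 1) ↪ Fin n :=
  (swapIdx k).toEmbedding.trans m

def trunc {d : ℕ} (m : Fin (d + 1) ↪ Fin n) : Fin d ↪ Fin n :=
  Fin.castSuccEmb.trans m

def snocEmb {d : ℕ} (m : Fin d ↪ Fin n) (j : Fin n) (hj : j ∉ Set.range ⇑m) :
    Fin (d + 1) ↪ Fin n := by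
  refine ⟨Fin.snoc ⇑m j, ?_⟩
  intro a b hab
  induction a using Fin.lastCases with
  | last =>
    induction b using Fin.lastCases with
    | last => rfl
    | cast b =>
      rw [Fin.snoc_last, Fin.snoc_castSucc] at hab
      exact absurd ⟨b, hab.symm⟩ hj
  | cast a =>
    induction b using Fin.lastCases with
    | last =>
      rw [Fin.snoc_last, Fin.snoc_castSucc] at hab
      exact absurd ⟨a, hab⟩ hj
    | cast b =>
      rw [Fin.snoc_castSucc, Fin.snoc_castSucc] at hab
      rw [m.injective hab]

noncomputable def incr (x : Fin n → Fin (N + 1)) (i : Fin n) : Fin n → Fin (N + 1) :=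
  Function.update x i (if h : (x i : ℕ) + 1 < N + 1 then ⟨(x i : ℕ) + 1, h⟩ else x i)

noncomputable def decr (x : Fin n → Fin (N + 1)) (i : Fin n) : Fin n → Fin (N + 1) :=
  Function.update x i ⟨(x i : ℕ) - 1, by have := (x i).isLt; omega⟩

lemma incr_val {x : Fin n → Fin (N + 1)} {μ : Fin n} (h : (x μ : ℕ) + 1 ≤ N) (i : Fin n) :
    ((incr x μ i : Fin (N + 1)) : ℕ) = (x i : ℕ) + if i = μ then 1 else 0 := by
  rcases eq_or_ne i μ with rfl | hi
  · rw [incr, Function.update_self, dif_pos (by omega)]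
    simp
  · rw [incr, Function.update_of_ne hi, if_neg hi]; omega

lemma decr_val {x : Fin n → Fin (N + 1)} {μ : Fin n} (i : Fin n) :
    ((decr x μ i : Fin (N + 1)) : ℕ) = (x i : ℕ) - if i = μ then 1 else 0 := by
  rcases eq_or_ne i μ with rfl | hi
  · rw [decr, Function.update_self]; simp
  · rw [decr, Function.update_of_ne hi, if_neg hi]; omega

lemma decr_incr {x : Fin n → Fin (N + 1)} {μ : Fin n} (h : (x μ : ℕ) + 1 ≤ N) :
    decr (incr x μ) μ = x := by
  funext i
  rcases eq_or_ne i μ with rfl | hi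
  · refine Fin.ext ?_
    rw [decr_val, if_pos rfl, incr_val h, if_pos rfl]
    omega
  · rw [decr, Function.update_of_ne hi, incr, Function.update_of_ne hi]

lemma incr_decr {x : Fin n → Fin (N + 1)} {μ : Fin n} (h : 1 ≤ (x μ : ℕ)) :
    incr (decr x μ) μ = x := by
  funext i
  rcases eq_or_ne i μ with rfl | hi
  · refine Fin.ext ?_
    have hlt := (x i).isLt
    rw [incr_val (μ := i) (by rw [decr_val, if_pos rfl]; omega) i, if_pos rfl, decr_val,
      if_pos rfl]
    omega
  · rw [incr, Function.update_of_ne hi, decr, Function.update_of_ne hi]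

/-! ### invariance lemmas -/

lemma range_comp_equiv {d : ℕ} (m : Fin d ↪ Fin n) (e : Equiv.Perm (Fin d)) :
    Set.range ⇑(e.toEmbedding.trans m) = Set.range ⇑m := by
  have : ⇑(e.toEmbedding.trans m) = ⇑m ∘ ⇑e := rfl
  rw [this, Set.range_comp, e.surjective.range_eq, Set.image_univ]

lemma OK_comp_equiv {d : ℕ} {x : Fin n → Fin (N + 1)} (m : Fin d ↪ Fin n)
    (e : Equiv.Perm (Fin d)) : OK N x (e.toEmbedding.trans m) ↔ OK N x m := by
  unfold OK
  rw [range_comp_equiv]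
  constructor
  · rintro ⟨h1, h2⟩
    exact ⟨h1, fun l => by simpa using h2 (e.symm l)⟩
  · rintro ⟨h1, h2⟩
    exact ⟨h1, fun l => h2 (e l)⟩

lemma Pfin_comp_equiv {d : ℕ} (m : Fin d ↪ Fin n) (e : Equiv.Perm (Fin d)) :
    Pfin (e.toEmbedding.trans m) = Pfin m := by
  unfold Pfin
  have : (fun l => ((e.toEmbedding.trans m) l, true)) = (fun l => ((m l : Fin n), true)) ∘ ⇑e :=
    rfl
  rw [this, ← Finset.image_image, Finset.image_univ_equiv]

/-! ### rotation and swap: effect on vertices -/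

lemma val_add_one_lt {D : ℕ} {t : Fin (D + 1)} (h : (t : ℕ) < D) : ((t + 1 : Fin (D + 1)) : ℕ) = (t : ℕ) + 1 := by
  rw [Fin.val_add_eq_ite]
  have h1 : ((1 : Fin (D + 1)) : ℕ) = 1 % (D + 1) := rfl
  have : 1 % (D + 1) = 1 := Nat.mod_eq_of_lt (by omega)
  rw [h1, this, if_neg (by omega)]

lemma swapIdx_val_lt {d : ℕ} {k : Fin (d + 2)} (hk0 : (k : ℕ) ≠ 0) (hkl : (k : ℕ) ≠ d + 1)
    {κ : ℕ} (hκ : κ ≠ (k : ℕ)) (l : Fin (d + 1)) :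
    ((swapIdx k l : Fin (d + 1)) : ℕ) < κ ↔ (l : ℕ) < κ := by
  have hlt := k.isLt
  set a : Fin (d + 1) := ⟨(k : ℕ) - 1, by omega⟩ with ha
  set b : Fin (d + 1) := ⟨min (k : ℕ) d, Nat.lt_succ_of_le (Nat.min_le_right _ _)⟩ with hb
  have hbv : (b : ℕ) = (k : ℕ) := by rw [hb]; simp; omega
  have hav : (a : ℕ) = (k : ℕ) - 1 := rfl
  rcases eq_or_ne l a with rfl | hla
  · rw [swapIdx, Equiv.swap_apply_left, hbv, hav]
    omega
  · rcases eq_or_ne l b with rfl | hlb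
    · rw [swapIdx, Equiv.swap_apply_right, hav, hbv]
      omega
    · rw [swapIdx, Equiv.swap_apply_of_ne_of_ne hla hlb]

lemma vert_swap {d : ℕ} (x : Fin n → Fin (N + 1)) (m : Fin (d + 1) ↪ Fin n) {k : Fin (d + 2)}
    (hk0 : (k : ℕ) ≠ 0) (hkl : (k : ℕ) ≠ d + 1) {κ : ℕ} (hκ : κ ≠ (k : ℕ)) :
    vert N x ⇑(swapm m k) κ = vert N x ⇑m κ := by
  funext i
  unfold vert
  congr 1
  refine stp_congr ?_
  constructor
  · rintro ⟨l, hl, he⟩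
    exact ⟨swapIdx k l, (swapIdx_val_lt hk0 hkl hκ l).mpr hl, he⟩
  · rintro ⟨l, hl, he⟩
    refine ⟨swapIdx k l, (swapIdx_val_lt hk0 hkl hκ l).mpr hl, ?_⟩
    show m (swapIdx k (swapIdx k l)) = i
    rw [swapIdx, Equiv.swap_apply_self]
    exact he

lemma vert_rotl {d : ℕ} (x : Fin n → Fin (N + 1)) (m : Fin (d + 1) ↪ Fin n)
    (h : (x (m 0) : ℕ) + 1 ≤ N) {κ : ℕ} (hκ : κ ≤ d) :
    vert N (incr x (m 0)) ⇑(rotl m) κ = vert N x ⇑m (κ + 1) := by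
  funext i
  unfold vert
  have hrot : ∀ l : Fin (d + 1), rotl m l = m (l + 1) := fun l => by
    simp [rotl, finRotate_succ_apply]
  have hiv := incr_val (μ := m 0) h i
  rcases eq_or_ne i (m 0) with rfl | hi
  · rw [if_pos rfl] at hiv
    have h1 : stp (⇑(rotl m)) κ (m 0) = 0 := by
      refine stp_eq_zero ?_
      rintro ⟨l, hl, he⟩
      rw [hrot l] at he
      have h0 : l + 1 = 0 := m.injective he
      have := val_add_one_lt (t := l) (by omega)
      rw [h0] at this
      simp at this
    have h2 : stp (⇑m) (κ + 1) (m 0) = 1 := stp_eq_one ⟨0, by simp, rfl⟩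
    rw [h1, h2]
    omega
  · rw [if_neg hi] at hiv
    have h3 : stp (⇑(rotl m)) κ i = stp (⇑m) (κ + 1) i := by
      refine stp_congr ?_
      constructor
      · rintro ⟨l, hl, he⟩
        rw [hrot l] at he
        exact ⟨l + 1, by rw [val_add_one_lt (by omega)]; omega, he⟩
      · rintro ⟨t, ht, he⟩
        have ht0 : t ≠ 0 := by
          rintro rfl
          exact hi (he.symm)
        have htv : (t : ℕ) ≠ 0 := fun hc => ht0 (Fin.ext hc)
        refine ⟨t - 1, ?_, ?_⟩
        · rw [Fin.coe_sub_one, if_neg ht0]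
          omega
        · rw [hrot, sub_add_cancel]
          exact he
    rw [h3]
    omega

lemma vert_trunc {d : ℕ} (x : Fin n → Fin (N + 1)) (m : Fin (d + 1) ↪ Fin n) {κ : ℕ}
    (hκ : κ ≤ d) : vert N x ⇑(trunc m) κ = vert N x ⇑m κ := by
  funext i
  unfold vert
  congr 1
  refine stp_congr ?_
  constructor
  · rintro ⟨l, hl, he⟩
    exact ⟨l.castSucc, hl, he⟩
  · rintro ⟨t, ht, he⟩
    refine ⟨⟨(t : ℕ), by omega⟩, ht, ?_⟩
    show m (Fin.castSucc _) = i
    have : Fin.castSucc ⟨(t : ℕ), by omega⟩ = t := Fin.ext rfl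
    rw [this]
    exact he

end AsdimProof

namespace AsdimProof

open Finset

variable {n : ℕ}

section Fiber

variable (N : ℕ) (lab : (Fin n → ℤ) → Fin n × Bool)

open Classical in
/-- `d`-simplices whose labels are the `d` plus-labels of its directions plus one extra
new plus-label. -/
noncomputable def Tset (d : ℕ) : Finset ((Fin n → Fin (N + 1)) × (Fin d ↪ Fin n)) :=
  univ.filter (fun p => OK N p.1 p.2 ∧ ∃ j, j ∉ Set.range ⇑p.2 ∧
    image (fun k => Lab N lab p.1 p.2 k) univ = insert (j, true) (Pfin p.2))

open Classical in
/-- incidences: a `(d+1)`-simplex together with a vertex whose removal leaves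
exactly the plus-labels of the directions. -/
noncomputable def Iset (d : ℕ) :
    Finset (((Fin n → Fin (N + 1)) × (Fin (d + 1) ↪ Fin n)) × Fin (d + 2)) :=
  univ.filter (fun q => OK N q.1.1 q.1.2 ∧
    image (fun l : Fin (d + 1) => Lab N lab q.1.1 q.1.2 (q.2.succAbove l)) univ = Pfin q.1.2)

lemma mem_Tset {d : ℕ} {p : (Fin n → Fin (N + 1)) × (Fin d ↪ Fin n)} :
    p ∈ Tset N lab d ↔ OK N p.1 p.2 ∧ ∃ j, j ∉ Set.range ⇑p.2 ∧
      image (fun k => Lab N lab p.1 p.2 k) univ = insert (j, true) (Pfin p.2) := by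
  unfold Tset
  simp only [Finset.mem_filter, Finset.mem_univ, true_and]

lemma mem_Iset {d : ℕ} {q : ((Fin n → Fin (N + 1)) × (Fin (d + 1) ↪ Fin n)) × Fin (d + 2)} :
    q ∈ Iset N lab d ↔ OK N q.1.1 q.1.2 ∧
      image (fun l : Fin (d + 1) => Lab N lab q.1.1 q.1.2 (q.2.succAbove l)) univ =
        Pfin q.1.2 := by
  unfold Iset
  simp only [Finset.mem_filter, Finset.mem_univ, true_and]

end Fiber

section Helpers

lemma image_succAbove_eq_image_compl {d : ℕ} {β : Type*} [DecidableEq β]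
    (g : Fin (d + 2) → β) (k : Fin (d + 2)) :
    image (fun l => g (k.succAbove l)) univ = image g ({k}ᶜ) := by
  ext b
  simp only [mem_image, mem_univ, true_and, mem_compl, mem_singleton]
  constructor
  · rintro ⟨l, rfl⟩
    exact ⟨k.succAbove l, Fin.succAbove_ne k l, rfl⟩
  · rintro ⟨a, hak, rfl⟩
    obtain ⟨l, rfl⟩ := Fin.exists_succAbove_eq hak
    exact ⟨l, rfl⟩

lemma image_compl_singleton_congr {α β : Type*} [Fintype α] [DecidableEq α] [DecidableEq β]
    (g : α → β) {a b : α} (h : g a = g b) : image g ({a}ᶜ) = image g ({b}ᶜ) := by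
  rcases eq_or_ne a b with rfl | hab
  · rfl
  · ext c
    simp only [mem_image, mem_compl, mem_singleton]
    constructor
    · rintro ⟨y, hy, rfl⟩
      rcases eq_or_ne y b with rfl | hyb
      · exact ⟨a, hab, h⟩
      · exact ⟨y, hyb, rfl⟩
    · rintro ⟨y, hy, rfl⟩
      rcases eq_or_ne y a with rfl | hya
      · exact ⟨b, hab.symm, h.symm⟩
      · exact ⟨y, hya, rfl⟩

end Helpers

section FiberAnalysis

variable {N : ℕ} {lab : (Fin n → ℤ) → Fin n × Bool}
variable {d : ℕ} {x : Fin n → Fin (N + 1)} {m : Fin (d + 1) ↪ Fin n}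

open Classical in
/-- the set of vertices of the simplex whose removal leaves exactly the plus-labels. -/
noncomputable def fib (N : ℕ) (lab : (Fin n → ℤ) → Fin n × Bool) (x : Fin n → Fin (N + 1))
    (m : Fin (d + 1) ↪ Fin n) : Finset (Fin (d + 2)) :=
  univ.filter (fun k =>
    image (fun l : Fin (d + 1) => Lab N lab x m (k.succAbove l)) univ = Pfin m)

lemma mem_fib {k : Fin (d + 2)} :
    k ∈ fib N lab x m ↔
      image (fun l : Fin (d + 1) => Lab N lab x m (k.succAbove l)) univ = Pfin m := by
  unfold fib
  simp only [Finset.mem_filter, Finset.mem_univ, true_and]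

/-- injectivity of the labels off a fiber vertex. -/
lemma fib_inj {k : Fin (d + 2)} (hk : k ∈ fib N lab x m) :
    ∀ l l' : Fin (d + 1), Lab N lab x m (k.succAbove l) = Lab N lab x m (k.succAbove l') →
      l = l' := by
  rw [mem_fib] at hk
  have hcard : (image (fun l : Fin (d + 1) => Lab N lab x m (k.succAbove l)) univ).card =
      (univ : Finset (Fin (d + 1))).card := by
    rw [hk, Pfin_card]
    simp
  have := Finset.injOn_of_card_image_eq hcard
  intro l l' he
  exact this (mem_coe.mpr (mem_univ l)) (mem_coe.mpr (mem_univ l')) he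

/-- if a fiber vertex has a label outside `P`, the label is a fresh plus-label, the whole
simplex is rainbow and the fiber is a singleton. -/
lemma S1
    (hbd0 : ∀ v : Fin n → ℤ, (∀ i, 0 ≤ v i ∧ v i ≤ N) → ∀ i, v i = 0 → lab v ≠ (i, false))
    (hopp : ∀ u v : Fin n → ℤ, (∀ i, 0 ≤ u i ∧ u i ≤ N) → (∀ i, 0 ≤ v i ∧ v i ≤ N) →
      (∀ i, u i ≤ v i ∧ v i ≤ u i + 1) → (lab u).1 = (lab v).1 → (lab u).2 = (lab v).2)
    {k₀ : Fin (d + 2)} (hOK : OK N x m) (hk₀ : k₀ ∈ fib N lab x m)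
    (ht : Lab N lab x m k₀ ∉ Pfin m) :
    ∃ j, j ∉ Set.range ⇑m ∧ Lab N lab x m k₀ = (j, true) ∧
      image (fun k => Lab N lab x m k) univ = insert (j, true) (Pfin m) ∧
      fib N lab x m = {k₀} := by
  have hfib : fib N lab x m = {k₀} := by
    ext k
    simp only [mem_singleton]
    constructor
    · intro hk
      by_contra hkk
      have h1 : Lab N lab x m k₀ ∈ Pfin m := by
        rw [← mem_fib.mp hk]
        obtain ⟨l, hl⟩ := Fin.exists_succAbove_eq (Ne.symm hkk)
        exact mem_image.mpr ⟨l, mem_univ l, by rw [hl]⟩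
      exact ht h1
    · rintro rfl; exact hk₀
  rcases hLL : Lab N lab x m k₀ with ⟨j, bb⟩
  have hbox : ∀ κ : ℕ, ∀ i, 0 ≤ vert N x ⇑m κ i ∧ vert N x ⇑m κ i ≤ N :=
    fun κ i => vert_mem_box N hOK κ i
  cases bb with
  | true =>
    have hj : j ∉ Set.range ⇑m := by
      intro hjr
      exact ht (by rw [hLL]; exact mem_Pfin'.mpr hjr)
    refine ⟨j, hj, rfl, ?_, hfib⟩
    rw [image_eq_insert_succAbove (fun k => Lab N lab x m k) k₀, mem_fib.mp hk₀, hLL]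
  | false =>
    exfalso
    by_cases hjr : j ∈ Set.range ⇑m
    · have h2 : (j, true) ∈ Pfin m := mem_Pfin'.mpr hjr
      rw [← mem_fib.mp hk₀] at h2
      obtain ⟨l, -, hl⟩ := mem_image.mp h2
      set k₁ := k₀.succAbove l with hk₁
      have hcomp := vert_comparable N x ⇑m (κ := min (k₀ : ℕ) (k₁ : ℕ))
        (κ' := max (k₀ : ℕ) (k₁ : ℕ)) (le_max_of_le_left (min_le_left _ _))
      rcases le_total (k₀ : ℕ) (k₁ : ℕ) with hle | hle
      · have := hopp (vert N x ⇑m (k₀ : ℕ)) (vert N x ⇑m (k₁ : ℕ)) (hbox _) (hbox _)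
          (fun i => by
            have := vert_comparable N x ⇑m hle i
            exact this)
          (by show (Lab N lab x m k₀).1 = (Lab N lab x m k₁).1; rw [hLL, hl])
        rw [show lab (vert N x ⇑m (k₀:ℕ)) = Lab N lab x m k₀ from rfl,
          show lab (vert N x ⇑m (k₁:ℕ)) = Lab N lab x m k₁ from rfl, hLL, hl] at this
        simp at this
      · have := hopp (vert N x ⇑m (k₁ : ℕ)) (vert N x ⇑m (k₀ : ℕ)) (hbox _) (hbox _)
          (fun i => by
            have := vert_comparable N x ⇑m hle i
            exact this)
          (by show (Lab N lab x m k₁).1 = (Lab N lab x m k₀).1; rw [hLL, hl])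
        rw [show lab (vert N x ⇑m (k₀:ℕ)) = Lab N lab x m k₀ from rfl,
          show lab (vert N x ⇑m (k₁:ℕ)) = Lab N lab x m k₁ from rfl, hLL, hl] at this
        simp at this
    · have h3 : vert N x ⇑m (k₀ : ℕ) j = 0 := by
        unfold vert
        rw [hOK.1 j hjr, stp_eq_zero_of_not_mem _ _ hjr]
        simp
      exact hbd0 (vert N x ⇑m (k₀ : ℕ)) (hbox _) j h3 hLL

/-- if a fiber vertex has a label inside `P`, there is exactly one other fiber vertex. -/
lemma S2 {k₀ : Fin (d + 2)} (hk₀ : k₀ ∈ fib N lab x m)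
    (ht : Lab N lab x m k₀ ∈ Pfin m) :
    ∃ k₁, k₁ ≠ k₀ ∧ fib N lab x m = {k₀, k₁} := by
  classical
  have h2 : Lab N lab x m k₀ ∈ image (fun l : Fin (d+1) => Lab N lab x m (k₀.succAbove l)) univ := by
    rw [mem_fib.mp hk₀]; exact ht
  obtain ⟨l₁, -, hl₁⟩ := mem_image.mp h2
  set k₁ := k₀.succAbove l₁ with hk₁def
  have hne : k₁ ≠ k₀ := Fin.succAbove_ne k₀ l₁
  refine ⟨k₁, hne, ?_⟩
  have hk₁ : k₁ ∈ fib N lab x m := by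
    rw [mem_fib, image_succAbove_eq_image_compl,
      image_compl_singleton_congr (fun k => Lab N lab x m k) (a := k₁) (b := k₀) (by exact hl₁),
      ← image_succAbove_eq_image_compl]
    exact mem_fib.mp hk₀
  ext k
  simp only [mem_insert, mem_singleton]
  constructor
  · intro hk
    by_contra hkk
    push_neg at hkk
    obtain ⟨hkk₀, hkk₁⟩ := hkk
    obtain ⟨l₂, hl₂⟩ := Fin.exists_succAbove_eq hkk₀
    -- the value of the removed vertex `k` is in `P` but not in the image of the others
    have hvP : Lab N lab x m k ∈ Pfin m := by
      rw [← mem_fib.mp hk₀]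
      exact mem_image.mpr ⟨l₂, mem_univ _, by rw [hl₂]⟩
    have hvnot : Lab N lab x m k ∉
        image (fun l : Fin (d+1) => Lab N lab x m (k.succAbove l)) univ := by
      intro hmem
      obtain ⟨l₃, -, hl₃⟩ := mem_image.mp hmem
      set y := k.succAbove l₃ with hydef
      have hyk : y ≠ k := Fin.succAbove_ne k l₃
      rcases eq_or_ne y k₀ with rfl | hyk₀
      · -- then t = v, contradiction with injectivity
        have hl₁l₂ : l₁ ≠ l₂ := by
          intro hc
          rw [hc, hl₂] at hk₁def
          exact hkk₁ hk₁def.symm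
        have : Lab N lab x m k₁ ≠ Lab N lab x m k := by
          rw [hk₁def, ← hl₂]
          intro hc
          exact hl₁l₂ (fib_inj hk₀ l₁ l₂ hc)
        rw [hl₁, ← hl₃] at this
        exact this rfl
      · obtain ⟨ly, hly⟩ := Fin.exists_succAbove_eq hyk₀
        have hlyl₂ : ly ≠ l₂ := by
          intro hc
          rw [hc, hl₂] at hly
          exact hyk hly.symm
        have : Lab N lab x m y ≠ Lab N lab x m k := by
          rw [← hly, ← hl₂]
          intro hc
          exact hlyl₂ (fib_inj hk₀ ly l₂ hc)
        rw [← hl₃] at this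
        exact this rfl
    rw [mem_fib.mp hk] at hvnot
    exact hvnot hvP
  · rintro (rfl | rfl)
    · exact hk₀
    · exact hk₁

end FiberAnalysis

end AsdimProof

namespace AsdimProof

open Finset

variable {n : ℕ} {N : ℕ} {lab : (Fin n → ℤ) → Fin n × Bool}
variable {d : ℕ} {x : Fin n → Fin (N + 1)} {m : Fin (d + 1) ↪ Fin n}

/-- if the simplex is rainbow with a fresh plus-label, the fiber is a singleton. -/
lemma Aprime (hOK : OK N x m)
    (hT : ∃ j, j ∉ Set.range ⇑m ∧
      image (fun k => Lab N lab x m k) univ = insert (j, true) (Pfin m)) :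
    (fib N lab x m).card = 1 := by
  classical
  obtain ⟨j, hj, himg⟩ := hT
  have hjP : (j, true) ∉ Pfin m := fun h => hj (mem_Pfin'.mp h)
  have hcard : (image (fun k => Lab N lab x m k) univ).card =
      (univ : Finset (Fin (d + 2))).card := by
    rw [himg, card_insert_of_notMem hjP, Pfin_card]
    simp
  have hinjOn := Finset.injOn_of_card_image_eq hcard
  have hinj : ∀ a b : Fin (d + 2), Lab N lab x m a = Lab N lab x m b → a = b :=
    fun a b h => hinjOn (by simp) (by simp) h
  have hjmem : (j, true) ∈ image (fun k => Lab N lab x m k) univ := by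
    rw [himg]; exact mem_insert_self _ _
  obtain ⟨k₀, -, hk₀v⟩ := mem_image.mp hjmem
  have hdel : image (fun l : Fin (d + 1) => Lab N lab x m (k₀.succAbove l)) univ = Pfin m := by
    apply Finset.eq_of_subset_of_card_le
    · intro p hp
      obtain ⟨l, -, hl⟩ := mem_image.mp hp
      have hpin : p ∈ insert (j, true) (Pfin m) := by
        rw [← himg]; exact mem_image.mpr ⟨_, mem_univ _, hl⟩
      rcases mem_insert.mp hpin with rfl | h
      · exfalso
        have : k₀.succAbove l = k₀ := hinj _ _ (by rw [hl, hk₀v])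
        exact Fin.succAbove_ne k₀ l this
      · exact h
    · rw [Pfin_card]
      have : (image (fun l : Fin (d + 1) => Lab N lab x m (k₀.succAbove l)) univ).card
          = d + 1 := by
        rw [Finset.card_image_of_injective _
          (fun a b h => Fin.succAbove_right_injective (hinj _ _ h))]
        simp
      omega
  have hk₀fib : k₀ ∈ fib N lab x m := mem_fib.mpr hdel
  have hfib : fib N lab x m = {k₀} := by
    ext k
    simp only [mem_singleton]
    constructor
    · intro hk
      by_contra hkk
      have h1 : Lab N lab x m k₀ ∈ Pfin m := by
        rw [← mem_fib.mp hk]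
        obtain ⟨l, hl⟩ := Fin.exists_succAbove_eq (Ne.symm hkk)
        exact mem_image.mpr ⟨l, mem_univ l, by rw [hl]⟩
      rw [hk₀v] at h1
      exact hjP h1
    · rintro rfl; exact hk₀fib
  rw [hfib, card_singleton]

open Classical in
lemma fiber_parity
    (hbd0 : ∀ v : Fin n → ℤ, (∀ i, 0 ≤ v i ∧ v i ≤ N) → ∀ i, v i = 0 → lab v ≠ (i, false))
    (hopp : ∀ u v : Fin n → ℤ, (∀ i, 0 ≤ u i ∧ u i ≤ N) → (∀ i, 0 ≤ v i ∧ v i ≤ N) →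
      (∀ i, u i ≤ v i ∧ v i ≤ u i + 1) → (lab u).1 = (lab v).1 → (lab u).2 = (lab v).2)
    (hOK : OK N x m) :
    ((fib N lab x m).card : ZMod 2) = if (∃ j, j ∉ Set.range ⇑m ∧
      image (fun k => Lab N lab x m k) univ = insert (j, true) (Pfin m)) then 1 else 0 := by
  by_cases hT : ∃ j, j ∉ Set.range ⇑m ∧
      image (fun k => Lab N lab x m k) univ = insert (j, true) (Pfin m)
  · rw [if_pos hT, Aprime hOK hT, Nat.cast_one]
  · rw [if_neg hT]
    rcases (fib N lab x m).eq_empty_or_nonempty with he | ⟨k₀, hk₀⟩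
    · rw [he]; simp
    · by_cases htP : Lab N lab x m k₀ ∈ Pfin m
      · obtain ⟨k₁, hne, hfib⟩ := S2 hk₀ htP
        rw [hfib, card_insert_of_notMem (by simp [Ne.symm hne]), card_singleton]
        decide
      · obtain ⟨j, hj, -, himg, -⟩ := S1 hbd0 hopp hOK hk₀ htP
        exact absurd ⟨j, hj, himg⟩ hT

lemma cast_card_filter {α : Type*} [Fintype α] (p : α → Prop) [DecidablePred p] :
    (((univ.filter p).card : ℕ) : ZMod 2) = ∑ a : α, if p a then (1 : ZMod 2) else 0 := by
  rw [Finset.card_filter, Nat.cast_sum]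
  exact Finset.sum_congr rfl (fun a _ => by split_ifs <;> simp)

lemma L3
    (hbd0 : ∀ v : Fin n → ℤ, (∀ i, 0 ≤ v i ∧ v i ≤ N) → ∀ i, v i = 0 → lab v ≠ (i, false))
    (hopp : ∀ u v : Fin n → ℤ, (∀ i, 0 ≤ u i ∧ u i ≤ N) → (∀ i, 0 ≤ v i ∧ v i ≤ N) →
      (∀ i, u i ≤ v i ∧ v i ≤ u i + 1) → (lab u).1 = (lab v).1 → (lab u).2 = (lab v).2)
    (d : ℕ) :
    (((Iset N lab d).card : ℕ) : ZMod 2) = (((Tset N lab (d + 1)).card : ℕ) : ZMod 2) := by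
  classical
  rw [Iset, Tset, cast_card_filter, cast_card_filter, Fintype.sum_prod_type]
  refine Finset.sum_congr rfl (fun σ _ => ?_)
  by_cases hOK : OK N σ.1 σ.2
  · have hstep : ∀ k : Fin (d + 2),
        (if OK N σ.1 σ.2 ∧
            image (fun l : Fin (d + 1) => Lab N lab σ.1 σ.2 (k.succAbove l)) univ
              = Pfin σ.2 then (1 : ZMod 2) else 0) =
        (if image (fun l : Fin (d + 1) => Lab N lab σ.1 σ.2 (k.succAbove l)) univ
              = Pfin σ.2 then (1 : ZMod 2) else 0) := by
      intro k
      by_cases hf : image (fun l : Fin (d + 1) => Lab N lab σ.1 σ.2 (k.succAbove l)) univ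
          = Pfin σ.2 <;> simp [hf, hOK]
    rw [Finset.sum_congr rfl (fun k _ => hstep k)]
    have hfibsum : ∑ k : Fin (d + 2),
        (if image (fun l : Fin (d + 1) => Lab N lab σ.1 σ.2 (k.succAbove l)) univ
            = Pfin σ.2 then (1 : ZMod 2) else 0) = ((fib N lab σ.1 σ.2).card : ZMod 2) := by
      rw [fib, cast_card_filter]
    rw [hfibsum, fiber_parity hbd0 hopp hOK]
    by_cases hT : ∃ j, j ∉ Set.range ⇑σ.2 ∧
        image (fun k => Lab N lab σ.1 σ.2 k) univ = insert (j, true) (Pfin σ.2) <;>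
      simp [hT, hOK]
  · simp [hOK]

/-- the base case: there is exactly one rainbow `0`-simplex. -/
lemma Tset_zero_card
    (hbd0 : ∀ v : Fin n → ℤ, (∀ i, 0 ≤ v i ∧ v i ≤ N) → ∀ i, v i = 0 → lab v ≠ (i, false)) :
    (Tset N lab 0).card = 1 := by
  classical
  set z : Fin n → ℤ := fun _ => 0 with hz
  have hzbox : ∀ i, 0 ≤ z i ∧ z i ≤ N := fun i => ⟨le_refl _, Int.natCast_nonneg N⟩
  rcases hlz : lab z with ⟨j₀, b₀⟩
  have hb₀ : b₀ = true := by
    cases b₀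
    · exact absurd hlz (hbd0 z hzbox j₀ rfl)
    · rfl
  subst hb₀
  set m₀ : Fin 0 ↪ Fin n := Function.Embedding.ofIsEmpty with hm₀
  set x₀ : Fin n → Fin (N + 1) := fun _ => 0 with hx₀
  have hvz : ∀ κ : ℕ, vert N x₀ ⇑m₀ κ = z := by
    intro κ
    funext i
    rw [hz]
    show (x₀ i : ℤ) + stp (⇑m₀) κ i = 0
    rw [stp_eq_zero (by rintro ⟨l, -, -⟩; exact l.elim0), hx₀]
    simp
  rw [Finset.card_eq_one]
  refine ⟨(x₀, m₀), ?_⟩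
  ext p
  rw [mem_Tset _ _, Finset.mem_singleton]
  constructor
  · rintro ⟨hOK, -⟩
    have hx : p.1 = x₀ := by
      funext i
      exact hOK.1 i (by rintro ⟨l, -⟩; exact l.elim0)
    have hm : p.2 = m₀ := DFunLike.ext _ _ (fun l => l.elim0)
    exact Prod.ext hx hm
  · rintro rfl
    refine ⟨⟨fun i _ => rfl, fun l => l.elim0⟩, j₀, by rintro ⟨l, -⟩; exact l.elim0, ?_⟩
    have huniv : (univ : Finset (Fin 1)) = {0} := by
      ext a; simp [Fin.eq_zero a]
    have hP : Pfin m₀ = ∅ := by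
      rw [Pfin]
      simp
    rw [huniv, Finset.image_singleton, hP]
    show ({lab (vert N x₀ ⇑m₀ ((0 : Fin 1) : ℕ))} : Finset _) = _
    rw [hvz, hlz]
    rfl

lemma Tset_top_card : (Tset N lab n).card = 0 := by
  classical
  rw [Finset.card_eq_zero]
  rw [Finset.eq_empty_iff_forall_notMem]
  intro p hp
  obtain ⟨-, j, hj, -⟩ := (mem_Tset _ _).mp hp
  obtain ⟨l, hl⟩ := Finite.injective_iff_surjective.mp p.2.injective j
  exact hj ⟨l, hl⟩

end AsdimProof

namespace AsdimProof

open Finset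

variable {n : ℕ} {N : ℕ} {lab : (Fin n → ℤ) → Fin n × Bool}
variable {d : ℕ}

/-- unmatched incidences: dropped top vertex, bottom face at height `0`. -/
def UnmCond (q : ((Fin n → Fin (N + 1)) × (Fin (d + 1) ↪ Fin n)) × Fin (d + 2)) : Prop :=
  q.2 = Fin.last (d + 1) ∧ (q.1.1 (q.1.2 (Fin.last d)) : ℕ) = 0

/-- the pairing on matched incidences. -/
noncomputable def Phi (q : ((Fin n → Fin (N + 1)) × (Fin (d + 1) ↪ Fin n)) × Fin (d + 2)) :
    ((Fin n → Fin (N + 1)) × (Fin (d + 1) ↪ Fin n)) × Fin (d + 2) :=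
  if (q.2 : ℕ) = 0 then ((incr q.1.1 (q.1.2 0), rotl q.1.2), Fin.last (d + 1))
  else if (q.2 : ℕ) = d + 1 then ((decr q.1.1 (q.1.2 (Fin.last d)), rotr q.1.2), 0)
  else ((q.1.1, swapm q.1.2 q.2), q.2)

lemma rotl_rotr (m : Fin (d + 1) ↪ Fin n) : rotl (rotr m) = m :=
  DFunLike.ext _ _ fun l => by
    show m ((finRotate (d + 1)).symm (finRotate (d + 1) l)) = m l
    rw [Equiv.symm_apply_apply]

lemma rotr_rotl (m : Fin (d + 1) ↪ Fin n) : rotr (rotl m) = m :=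
  DFunLike.ext _ _ fun l => by
    show m (finRotate (d + 1) ((finRotate (d + 1)).symm l)) = m l
    rw [Equiv.apply_symm_apply]

lemma finRotate_symm_zero : (finRotate (d + 1)).symm 0 = Fin.last d := by
  rw [Equiv.symm_apply_eq, finRotate_last]

lemma rotl_apply_last (m : Fin (d + 1) ↪ Fin n) : rotl m (Fin.last d) = m 0 := by
  show m (finRotate (d + 1) (Fin.last d)) = m 0
  rw [finRotate_last]

lemma rotr_apply_zero (m : Fin (d + 1) ↪ Fin n) : rotr m 0 = m (Fin.last d) := by
  show m ((finRotate (d + 1)).symm 0) = m (Fin.last d)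
  rw [finRotate_symm_zero]

lemma rotl_apply (m : Fin (d + 1) ↪ Fin n) (l : Fin (d + 1)) :
    rotl m l = m (finRotate (d + 1) l) := rfl

lemma range_rotl (m : Fin (d + 1) ↪ Fin n) : Set.range ⇑(rotl m) = Set.range ⇑m :=
  range_comp_equiv m (finRotate (d + 1))

lemma range_rotr (m : Fin (d + 1) ↪ Fin n) : Set.range ⇑(rotr m) = Set.range ⇑m :=
  range_comp_equiv m (finRotate (d + 1)).symm

/-- Key case `k = 0`: the analysis of an incidence whose dropped vertex is the bottom one. -/
lemma case_zero
    (hbdN : ∀ v : Fin n → ℤ, (∀ i, 0 ≤ v i ∧ v i ≤ N) → ∀ i, v i = N → lab v ≠ (i, true))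
    {x : Fin n → Fin (N + 1)} {m : Fin (d + 1) ↪ Fin n}
    (hq : ((x, m), (0 : Fin (d + 2))) ∈ Iset N lab d) :
    ((x (m 0) : ℕ) + 2 ≤ N) ∧
      ((incr x (m 0), rotl m), Fin.last (d + 1)) ∈ Iset N lab d := by
  obtain ⟨hOK, hfacet⟩ := (mem_Iset N lab).mp hq
  dsimp only at hOK hfacet
  have hx1 : (x (m 0) : ℕ) + 1 ≤ N := hOK.2 0
  -- the vertex with label `(m 0, true)` on the facet has `m 0`-coordinate `x (m 0) + 1`,
  -- so by the boundary condition `x (m 0) + 1 ≠ N`.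
  have hxN : (x (m 0) : ℕ) + 2 ≤ N := by
    have hmem : ((m 0 : Fin n), true) ∈ Pfin m := mem_Pfin'.mpr ⟨0, rfl⟩
    rw [← hfacet] at hmem
    obtain ⟨l, -, hl⟩ := mem_image.mp hmem
    have hsv : ((0 : Fin (d + 2)).succAbove l : ℕ) = (l : ℕ) + 1 := by
      rw [Fin.succAbove_zero]
      exact Fin.val_succ l
    have hw : vert N x ⇑m ((l : ℕ) + 1) (m 0) = (x (m 0) : ℤ) + 1 := by
      unfold vert
      rw [stp_eq_one ⟨0, by simp, rfl⟩]
    by_contra hcon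
    have hxeq : (x (m 0) : ℕ) + 1 = N := by omega
    have : vert N x ⇑m ((l : ℕ) + 1) (m 0) = (N : ℤ) := by rw [hw]; omega
    refine hbdN (vert N x ⇑m ((l : ℕ) + 1)) (fun i => vert_mem_box N hOK _ i) (m 0) this ?_
    show lab (vert N x ⇑m ((l : ℕ) + 1)) = (m 0, true)
    rw [← hsv]
    exact hl
  refine ⟨hxN, (mem_Iset N lab).mpr ⟨?_, ?_⟩⟩
  · -- OK of the rotated simplex
    show OK N (incr x (m 0)) (rotl m)
    constructor
    · intro i hi
      rw [range_rotl] at hi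
      have hine : i ≠ m 0 := fun hc => hi (hc ▸ ⟨0, rfl⟩)
      rw [incr, Function.update_of_ne hine]
      exact hOK.1 i hi
    · intro l
      have hv := incr_val (μ := m 0) hx1 (rotl m l)
      rcases eq_or_ne (rotl m l) (m 0) with he | hne
      · rw [he] at hv ⊢
        rw [if_pos rfl] at hv
        omega
      · rw [if_neg hne] at hv
        have : (x (rotl m l) : ℕ) + 1 ≤ N := hOK.2 (finRotate (d + 1) l)
        omega
  · -- facet condition
    have hface : ∀ l : Fin (d + 1),
        Lab N lab (incr x (m 0)) (rotl m) ((Fin.last (d + 1)).succAbove l) =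
          Lab N lab x m ((0 : Fin (d + 2)).succAbove l) := by
      intro l
      show lab (vert N (incr x (m 0)) ⇑(rotl m) (((Fin.last (d + 1)).succAbove l : Fin (d+2)) : ℕ))
        = lab (vert N x ⇑m (((0 : Fin (d + 2)).succAbove l : Fin (d+2)) : ℕ))
      rw [Fin.succAbove_last, Fin.succAbove_zero]
      have h1 : ((l.castSucc : Fin (d + 2)) : ℕ) = (l : ℕ) := rfl
      have h2 : ((l.succ : Fin (d + 2)) : ℕ) = (l : ℕ) + 1 := rfl
      rw [h1, h2, vert_rotl x m hx1 (by omega)]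
    show image (fun l : Fin (d + 1) =>
      Lab N lab (incr x (m 0)) (rotl m) ((Fin.last (d + 1)).succAbove l)) univ = Pfin (rotl m)
    rw [show Pfin (rotl m) = Pfin m from Pfin_comp_equiv m (finRotate (d + 1))]
    rw [show (fun l : Fin (d + 1) =>
        Lab N lab (incr x (m 0)) (rotl m) ((Fin.last (d + 1)).succAbove l)) =
      (fun l : Fin (d + 1) => Lab N lab x m ((0 : Fin (d + 2)).succAbove l)) from funext hface]
    exact hfacet

/-- Key case `k = last`, matched: the analysis of an incidence whose dropped vertex is the
top one, with positive bottom height. -/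
lemma case_last
    {x : Fin n → Fin (N + 1)} {m : Fin (d + 1) ↪ Fin n}
    (hq : ((x, m), (Fin.last (d + 1) : Fin (d + 2))) ∈ Iset N lab d)
    (hpos : (x (m (Fin.last d)) : ℕ) ≠ 0) :
    ((decr x (m (Fin.last d)), rotr m), (0 : Fin (d + 2))) ∈ Iset N lab d := by
  obtain ⟨hOK, hfacet⟩ := (mem_Iset N lab).mp hq
  dsimp only at hOK hfacet
  have hx1 : (x (m (Fin.last d)) : ℕ) + 1 ≤ N := hOK.2 (Fin.last d)
  have hdecr : ∀ i, ((decr x (m (Fin.last d)) i : Fin (N + 1)) : ℕ) =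
      (x i : ℕ) - if i = m (Fin.last d) then 1 else 0 := decr_val
  refine (mem_Iset N lab).mpr ⟨?_, ?_⟩
  · show OK N (decr x (m (Fin.last d))) (rotr m)
    constructor
    · intro i hi
      rw [range_rotr] at hi
      have hine : i ≠ m (Fin.last d) := fun hc => hi (hc ▸ ⟨Fin.last d, rfl⟩)
      rw [decr, Function.update_of_ne hine]
      exact hOK.1 i hi
    · intro l
      have hv := hdecr (rotr m l)
      rcases eq_or_ne (rotr m l) (m (Fin.last d)) with he | hne
      · rw [he] at hv ⊢
        rw [if_pos rfl] at hv
        omega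
      · rw [if_neg hne] at hv
        have : (x (rotr m l) : ℕ) + 1 ≤ N := hOK.2 ((finRotate (d + 1)).symm l)
        omega
  · -- facet condition via the rotation identity applied to the new simplex
    have hd1 : ((decr x (m (Fin.last d))) ((rotr m) 0) : ℕ) + 1 ≤ N := by
      rw [rotr_apply_zero, hdecr, if_pos rfl]
      omega
    have hface : ∀ l : Fin (d + 1),
        Lab N lab (decr x (m (Fin.last d))) (rotr m) ((0 : Fin (d + 2)).succAbove l) =
          Lab N lab x m ((Fin.last (d + 1)).succAbove l) := by
      intro l
      show lab (vert N (decr x (m (Fin.last d))) ⇑(rotr m)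
          (((0 : Fin (d + 2)).succAbove l : Fin (d+2)) : ℕ))
        = lab (vert N x ⇑m (((Fin.last (d + 1)).succAbove l : Fin (d+2)) : ℕ))
      rw [Fin.succAbove_last, Fin.succAbove_zero]
      have h1 : ((l.castSucc : Fin (d + 2)) : ℕ) = (l : ℕ) := rfl
      have h2 : ((l.succ : Fin (d + 2)) : ℕ) = (l : ℕ) + 1 := rfl
      rw [h1, h2]
      have hkey := vert_rotl (N := N) (decr x (m (Fin.last d))) (rotr m) hd1
        (κ := (l : ℕ)) (by omega)
      rw [show incr (decr x (m (Fin.last d))) ((rotr m) 0) = x by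
          rw [rotr_apply_zero]; exact incr_decr (by omega),
        rotl_rotr] at hkey
      rw [← hkey]
    show image (fun l : Fin (d + 1) =>
      Lab N lab (decr x (m (Fin.last d))) (rotr m) ((0 : Fin (d + 2)).succAbove l)) univ
        = Pfin (rotr m)
    rw [show Pfin (rotr m) = Pfin m from Pfin_comp_equiv m (finRotate (d + 1)).symm]
    rw [show (fun l : Fin (d + 1) =>
        Lab N lab (decr x (m (Fin.last d))) (rotr m) ((0 : Fin (d + 2)).succAbove l)) =
      (fun l : Fin (d + 1) => Lab N lab x m ((Fin.last (d + 1)).succAbove l)) from funext hface]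
    exact hfacet

/-- Key case: interior `k`. -/
lemma case_mid
    {x : Fin n → Fin (N + 1)} {m : Fin (d + 1) ↪ Fin n} {k : Fin (d + 2)}
    (hq : ((x, m), k) ∈ Iset N lab d) (hk0 : (k : ℕ) ≠ 0) (hkl : (k : ℕ) ≠ d + 1) :
    ((x, swapm m k), k) ∈ Iset N lab d ∧ swapm m k ≠ m ∧ swapm (swapm m k) k = m := by
  obtain ⟨hOK, hfacet⟩ := (mem_Iset N lab).mp hq
  dsimp only at hOK hfacet
  have hkd : (k : ℕ) ≤ d := by have := k.isLt; omega
  have hface : ∀ l : Fin (d + 1),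
      Lab N lab x (swapm m k) (k.succAbove l) = Lab N lab x m (k.succAbove l) := by
    intro l
    show lab (vert N x ⇑(swapm m k) ((k.succAbove l : Fin (d + 2)) : ℕ))
      = lab (vert N x ⇑m ((k.succAbove l : Fin (d + 2)) : ℕ))
    rw [vert_swap x m hk0 hkl
      (fun hc => Fin.succAbove_ne k l (Fin.ext hc))]
  refine ⟨(mem_Iset N lab).mpr ⟨?_, ?_⟩, ?_, ?_⟩
  · exact (OK_comp_equiv m (swapIdx k)).mpr hOK
  · show image (fun l : Fin (d + 1) =>
      Lab N lab x (swapm m k) (k.succAbove l)) univ = Pfin (swapm m k)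
    rw [show (fun l : Fin (d + 1) => Lab N lab x (swapm m k) (k.succAbove l)) =
      (fun l : Fin (d + 1) => Lab N lab x m (k.succAbove l)) from funext hface]
    rw [show Pfin (swapm m k) = Pfin m from Pfin_comp_equiv m (swapIdx k)]
    exact hfacet
  · -- no fixed point
    intro hc
    have ha := DFunLike.congr_fun hc (⟨(k : ℕ) - 1, by omega⟩ : Fin (d + 1))
    have hb : swapm m k ⟨(k : ℕ) - 1, by omega⟩
        = m ⟨min (k : ℕ) d, Nat.lt_succ_of_le (Nat.min_le_right _ _)⟩ := by
      show m ((swapIdx k) _) = _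
      rw [swapIdx, Equiv.swap_apply_left]
    rw [hb] at ha
    have heq := congrArg Fin.val (m.injective ha)
    have hmin : min (k : ℕ) d = (k : ℕ) := min_eq_left hkd
    have : min (k : ℕ) d = (k : ℕ) - 1 := heq
    omega
  · -- involution on the middle part
    refine DFunLike.ext _ _ fun l => ?_
    show m ((swapIdx k) ((swapIdx k) l)) = m l
    rw [swapIdx, Equiv.swap_apply_self]

end AsdimProof

namespace AsdimProof

open Finset

variable {n : ℕ} {N : ℕ} {lab : (Fin n → ℤ) → Fin n × Bool}
variable {d : ℕ}

lemma Phi_zero (q : ((Fin n → Fin (N + 1)) × (Fin (d + 1) ↪ Fin n)) × Fin (d + 2))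
    (h : (q.2 : ℕ) = 0) :
    Phi q = ((incr q.1.1 (q.1.2 0), rotl q.1.2), Fin.last (d + 1)) := by
  rw [Phi, if_pos h]

lemma Phi_last (q : ((Fin n → Fin (N + 1)) × (Fin (d + 1) ↪ Fin n)) × Fin (d + 2))
    (h0 : (q.2 : ℕ) ≠ 0) (hl : (q.2 : ℕ) = d + 1) :
    Phi q = ((decr q.1.1 (q.1.2 (Fin.last d)), rotr q.1.2), 0) := by
  rw [Phi, if_neg h0, if_pos hl]

lemma Phi_mid (q : ((Fin n → Fin (N + 1)) × (Fin (d + 1) ↪ Fin n)) × Fin (d + 2))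
    (h0 : (q.2 : ℕ) ≠ 0) (hl : (q.2 : ℕ) ≠ d + 1) :
    Phi q = ((q.1.1, swapm q.1.2 q.2), q.2) := by
  rw [Phi, if_neg h0, if_neg hl]

lemma Mat_paired
    (hbdN : ∀ v : Fin n → ℤ, (∀ i, 0 ≤ v i ∧ v i ≤ N) → ∀ i, v i = N → lab v ≠ (i, true))
    (q : ((Fin n → Fin (N + 1)) × (Fin (d + 1) ↪ Fin n)) × Fin (d + 2))
    (hq : q ∈ Iset N lab d) (hU : ¬ UnmCond q) :
    (Phi q ∈ Iset N lab d ∧ ¬ UnmCond (Phi q)) ∧ Phi (Phi q) = q ∧ Phi q ≠ q := by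
  obtain ⟨⟨x, m⟩, k⟩ := q
  rcases eq_or_ne ((k : Fin (d + 2)) : ℕ) 0 with hk0 | hk0
  · -- dropped bottom vertex
    have hk : k = 0 := Fin.ext hk0
    subst hk
    obtain ⟨hxN, hmem⟩ := case_zero hbdN hq
    have hx1 : (x (m 0) : ℕ) + 1 ≤ N := by omega
    have hPhi : Phi ((x, m), (0 : Fin (d + 2))) = ((incr x (m 0), rotl m), Fin.last (d + 1)) :=
      Phi_zero _ rfl
    rw [hPhi]
    have hval : ((incr x (m 0)) ((rotl m) (Fin.last d)) : ℕ) = (x (m 0) : ℕ) + 1 := by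
      rw [rotl_apply_last, incr_val hx1, if_pos rfl]
    refine ⟨⟨hmem, ?_⟩, ?_, ?_⟩
    · rintro ⟨-, hzero⟩
      rw [hval] at hzero
      omega
    · rw [Phi_last _ (by simp) (by simp)]
      refine Prod.ext (Prod.ext ?_ ?_) ?_
      · show decr (incr x (m 0)) ((rotl m) (Fin.last d)) = x
        rw [rotl_apply_last]
        exact decr_incr hx1
      · show rotr (rotl m) = m
        exact rotr_rotl m
      · rfl
    · intro hc
      have := congrArg (fun z => ((z.2 : Fin (d + 2)) : ℕ)) hc
      simp at this
  · rcases eq_or_ne ((k : Fin (d + 2)) : ℕ) (d + 1) with hkl | hkl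
    · -- dropped top vertex, matched
      have hk : k = Fin.last (d + 1) := Fin.ext (by rw [hkl]; rfl)
      subst hk
      have hpos : (x (m (Fin.last d)) : ℕ) ≠ 0 := by
        intro hc
        exact hU ⟨rfl, hc⟩
      have hmem := case_last hq hpos
      have hPhi : Phi ((x, m), Fin.last (d + 1)) =
          ((decr x (m (Fin.last d)), rotr m), (0 : Fin (d + 2))) := Phi_last _ hk0 hkl
      rw [hPhi]
      refine ⟨⟨hmem, ?_⟩, ?_, ?_⟩
      · rintro ⟨hc, -⟩
        have := congrArg (fun z : Fin (d + 2) => (z : ℕ)) hc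
        simp at this
      · rw [Phi_zero _ rfl]
        refine Prod.ext (Prod.ext ?_ ?_) ?_
        · show incr (decr x (m (Fin.last d))) ((rotr m) 0) = x
          rw [rotr_apply_zero]
          exact incr_decr (by omega)
        · show rotl (rotr m) = m
          exact rotl_rotr m
        · rfl
      · intro hc
        have := congrArg (fun z => ((z.2 : Fin (d + 2)) : ℕ)) hc
        simp at this
    · -- interior vertex
      obtain ⟨hmem, hne, hinv⟩ := case_mid hq hk0 hkl
      have hPhi : Phi ((x, m), k) = ((x, swapm m k), k) := Phi_mid _ hk0 hkl
      rw [hPhi]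
      refine ⟨⟨hmem, ?_⟩, ?_, ?_⟩
      · rintro ⟨hc, -⟩
        have := congrArg (fun z : Fin (d + 2) => (z : ℕ)) hc
        simp only [Fin.val_last] at this
        exact hkl this
      · rw [Phi_mid _ hk0 hkl]
        refine Prod.ext (Prod.ext rfl ?_) rfl
        show swapm (swapm m k) k = m
        exact hinv
      · intro hc
        exact hne (congrArg (fun z => z.1.2) hc)

open Classical in
lemma Mat_card_zero
    (hbdN : ∀ v : Fin n → ℤ, (∀ i, 0 ≤ v i ∧ v i ≤ N) → ∀ i, v i = N → lab v ≠ (i, true))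
    (d : ℕ) :
    ((((Iset N lab d).filter (fun q => ¬ UnmCond q)).card : ℕ) : ZMod 2) = 0 := by
  rw [Finset.card_eq_sum_ones, Nat.cast_sum]
  refine Finset.sum_involution (fun a _ => Phi a) (fun a ha => ?_) (fun a ha _ => ?_)
    (fun a ha => ?_) (fun a ha => ?_)
  · decide
  · obtain ⟨hqI, hqU⟩ := Finset.mem_filter.mp ha
    exact (Mat_paired hbdN a hqI hqU).2.2
  · obtain ⟨hqI, hqU⟩ := Finset.mem_filter.mp ha
    obtain ⟨⟨h1, h2⟩, -, -⟩ := Mat_paired hbdN a hqI hqU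
    exact Finset.mem_filter.mpr ⟨h1, h2⟩
  · obtain ⟨hqI, hqU⟩ := Finset.mem_filter.mp ha
    exact (Mat_paired hbdN a hqI hqU).2.1

/-! ### the unmatched incidences biject with the lower-dimensional rainbow simplices -/

lemma trunc_snoc {m' : Fin d ↪ Fin n} {j : Fin n} (hj : j ∉ Set.range ⇑m') :
    trunc (snocEmb m' j hj) = m' :=
  DFunLike.ext _ _ fun l => by
    show Fin.snoc (α := fun _ => Fin n) (⇑m') j l.castSucc = m' l
    rw [Fin.snoc_castSucc]

lemma snocEmb_last {m' : Fin d ↪ Fin n} {j : Fin n} (hj : j ∉ Set.range ⇑m') :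
    snocEmb m' j hj (Fin.last d) = j := by
  show Fin.snoc (α := fun _ => Fin n) (⇑m') j (Fin.last d) = j
  rw [Fin.snoc_last]

lemma Pfin_eq_insert (m : Fin (d + 1) ↪ Fin n) :
    Pfin m = insert (m (Fin.last d), true) (Pfin (trunc m)) := by
  rw [Pfin, image_eq_insert_succAbove (fun l : Fin (d + 1) => ((m l : Fin n), true)) (Fin.last d)]
  congr 1
  rw [show (fun l : Fin d => ((m ((Fin.last d).succAbove l) : Fin n), true)) =
    (fun l : Fin d => ((m l.castSucc : Fin n), true)) from funext (fun l => by
      rw [Fin.succAbove_last])]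
  rfl

lemma Lab_last_facet (x : Fin n → Fin (N + 1)) (m : Fin (d + 1) ↪ Fin n) (kk : Fin (d + 1)) :
    Lab N lab x (trunc m) kk = Lab N lab x m ((Fin.last (d + 1)).succAbove kk) := by
  show lab (vert N x ⇑(trunc m) ((kk : Fin (d + 1)) : ℕ)) =
    lab (vert N x ⇑m (((Fin.last (d + 1)).succAbove kk : Fin (d + 2)) : ℕ))
  rw [Fin.succAbove_last]
  have h1 : ((kk.castSucc : Fin (d + 2)) : ℕ) = (kk : ℕ) := rfl
  rw [h1, vert_trunc x m (by omega)]

lemma unm_to_T {x : Fin n → Fin (N + 1)} {m : Fin (d + 1) ↪ Fin n}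
    (hq : ((x, m), Fin.last (d + 1)) ∈ Iset N lab d)
    (h0 : (x (m (Fin.last d)) : ℕ) = 0) :
    OK N x (trunc m) ∧ (m (Fin.last d) ∉ Set.range ⇑(trunc m)) ∧
      image (fun k => Lab N lab x (trunc m) k) univ =
        insert (m (Fin.last d), true) (Pfin (trunc m)) := by
  obtain ⟨hOK, hfacet⟩ := (mem_Iset N lab).mp hq
  dsimp only at hOK hfacet
  have hjr : (m (Fin.last d) : Fin n) ∉ Set.range ⇑(trunc m) := by
    rintro ⟨l', hl'⟩
    have : l'.castSucc = Fin.last d := m.injective hl'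
    have := congrArg Fin.val this
    rw [Fin.coe_castSucc, Fin.val_last] at this
    exact absurd this (by omega)
  refine ⟨⟨?_, ?_⟩, hjr, ?_⟩
  · intro i hi
    by_cases hir : i ∈ Set.range ⇑m
    · obtain ⟨l, rfl⟩ := hir
      induction l using Fin.lastCases with
      | last => exact Fin.ext h0
      | cast l' => exact absurd ⟨l', rfl⟩ hi
    · exact hOK.1 i hir
  · intro l
    exact hOK.2 l.castSucc
  · rw [show (fun k => Lab N lab x (trunc m) k) =
      (fun k : Fin (d + 1) => Lab N lab x m ((Fin.last (d + 1)).succAbove k)) from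
      funext (Lab_last_facet x m)]
    rw [hfacet, Pfin_eq_insert]

open Classical in
lemma Unm_card (hN : 1 ≤ N) (d : ℕ) :
    ((Iset N lab d).filter UnmCond).card = (Tset N lab d).card := by
  refine Finset.card_bij (fun q _ => (q.1.1, trunc q.1.2)) ?_ ?_ ?_
  · -- maps into Tset
    rintro ⟨⟨x, m⟩, k⟩ ha
    obtain ⟨hqI, hUc⟩ := Finset.mem_filter.mp ha
    have hk := hUc.1
    have h0 := hUc.2
    dsimp only at hk h0 ⊢
    subst hk
    obtain ⟨hOK', hjr, himg⟩ := unm_to_T hqI h0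
    exact (mem_Tset N lab).mpr ⟨hOK', m (Fin.last d), hjr, himg⟩
  · -- injective
    rintro ⟨⟨x₁, m₁⟩, k₁⟩ ha₁ ⟨⟨x₂, m₂⟩, k₂⟩ ha₂ he
    obtain ⟨hqI₁, hUc₁⟩ := Finset.mem_filter.mp ha₁
    obtain ⟨hqI₂, hUc₂⟩ := Finset.mem_filter.mp ha₂
    have hk₁ := hUc₁.1
    have h01 := hUc₁.2
    have hk₂ := hUc₂.1
    have h02 := hUc₂.2
    dsimp only at hk₁ hk₂ h01 h02 he
    subst hk₁
    subst hk₂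
    have hx : x₁ = x₂ := congrArg Prod.fst he
    have htr : trunc m₁ = trunc m₂ := congrArg Prod.snd he
    subst hx
    obtain ⟨-, hjr₁, himg₁⟩ := unm_to_T hqI₁ h01
    obtain ⟨-, hjr₂, himg₂⟩ := unm_to_T hqI₂ h02
    rw [htr] at himg₁ hjr₁
    rw [himg₂] at himg₁
    have hjj : m₁ (Fin.last d) = m₂ (Fin.last d) := by
      have hmem : ((m₂ (Fin.last d) : Fin n), true) ∈
          insert ((m₁ (Fin.last d) : Fin n), true) (Pfin (trunc m₂)) := by
        rw [← himg₁]; exact mem_insert_self _ _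
      rcases mem_insert.mp hmem with hc | hc
      · exact (congrArg Prod.fst hc).symm
      · exact absurd (mem_Pfin'.mp hc) hjr₂
    have hm : m₁ = m₂ := by
      refine DFunLike.ext _ _ fun l => ?_
      induction l using Fin.lastCases with
      | last => exact hjj
      | cast l' => exact DFunLike.congr_fun htr l'
    rw [hm]
  · -- surjective
    rintro ⟨x, m'⟩ hb
    obtain ⟨hOK', j, hj, himg⟩ := (mem_Tset N lab).mp hb
    dsimp only at hOK' hj himg ⊢
    have hxj : x j = 0 := hOK'.1 j hj
    set m : Fin (d + 1) ↪ Fin n := snocEmb m' j hj with hm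
    have htr : trunc m = m' := trunc_snoc hj
    have hlast : m (Fin.last d) = j := snocEmb_last hj
    have hOK : OK N x m := by
      constructor
      · intro i hi
        refine hOK'.1 i ?_
        rintro ⟨l', hl'⟩
        exact hi ⟨l'.castSucc, by rw [← htr] at hl'; exact hl'⟩
      · intro l
        induction l using Fin.lastCases with
        | last =>
          rw [hlast, hxj]
          simpa using hN
        | cast l' =>
          have : m l'.castSucc = m' l' := by rw [← htr]; rfl
          rw [this]
          exact hOK'.2 l'
    have hfacet : image
        (fun l : Fin (d + 1) => Lab N lab x m ((Fin.last (d + 1)).succAbove l)) univ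
          = Pfin m := by
      rw [show (fun l : Fin (d + 1) => Lab N lab x m ((Fin.last (d + 1)).succAbove l)) =
        (fun l : Fin (d + 1) => Lab N lab x (trunc m) l) from
        funext (fun l => (Lab_last_facet x m l).symm)]
      rw [Pfin_eq_insert m, hlast, htr, himg]
    refine ⟨((x, m), Fin.last (d + 1)), ?_, ?_⟩
    · refine Finset.mem_filter.mpr ⟨(mem_Iset N lab).mpr ⟨hOK, hfacet⟩, rfl, ?_⟩
      show (x (m (Fin.last d)) : ℕ) = 0
      rw [hlast, hxj]
      rfl
    · show (x, trunc m) = (x, m')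
      rw [htr]

open Classical in
lemma L4
    (hbdN : ∀ v : Fin n → ℤ, (∀ i, 0 ≤ v i ∧ v i ≤ N) → ∀ i, v i = N → lab v ≠ (i, true))
    (hN : 1 ≤ N) (d : ℕ) :
    (((Iset N lab d).card : ℕ) : ZMod 2) = (((Tset N lab d).card : ℕ) : ZMod 2) := by
  have hsplit := Finset.card_filter_add_card_filter_not
    (s := Iset N lab d) (p := UnmCond)
  have : ((Iset N lab d).card : ZMod 2)
      = (((Iset N lab d).filter UnmCond).card : ZMod 2)
        + ((((Iset N lab d).filter (fun q => ¬ UnmCond q)).card : ℕ) : ZMod 2) := by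
    rw [← Nat.cast_add, hsplit]
  rw [this, Mat_card_zero hbdN d, add_zero, Unm_card hN d]

end AsdimProof

namespace AsdimProof

open Finset

/-- The discrete Poincaré–Miranda theorem on the box `{0,…,N}ⁿ`:
a labelling satisfying the boundary conditions must contain two comparable-within-one
points carrying opposite labels. -/
theorem discretePM {n : ℕ} (N : ℕ) (hN : 1 ≤ N) (lab : (Fin n → ℤ) → Fin n × Bool)
    (hbd0 : ∀ v : Fin n → ℤ, (∀ i, 0 ≤ v i ∧ v i ≤ N) → ∀ i, v i = 0 → lab v ≠ (i, false))
    (hbdN : ∀ v : Fin n → ℤ, (∀ i, 0 ≤ v i ∧ v i ≤ N) → ∀ i, v i = N → lab v ≠ (i, true))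
    (hopp : ∀ u v : Fin n → ℤ, (∀ i, 0 ≤ u i ∧ u i ≤ N) → (∀ i, 0 ≤ v i ∧ v i ≤ N) →
      (∀ i, u i ≤ v i ∧ v i ≤ u i + 1) → (lab u).1 = (lab v).1 → (lab u).2 = (lab v).2) :
    False := by
  have hchain : ∀ d : ℕ, (((Tset N lab d).card : ℕ) : ZMod 2) = 1 := by
    intro d
    induction d with
    | zero => rw [Tset_zero_card hbd0, Nat.cast_one]
    | succ d ih => rw [← L3 hbd0 hopp d, L4 hbdN hN d, ih]
  have h0 := hchain n
  rw [Tset_top_card, Nat.cast_zero] at h0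
  exact absurd h0 (by decide)

end AsdimProof

section ChainLemmas

variable {X : Type*} (d : X → X → ℝ) (s : ℝ) (Uset : Set X)

lemma ScaleChain.refl' {x : X} (hx : x ∈ Uset) : ScaleChain d s Uset x x :=
  ⟨0, fun _ => x, fun _ => hx, rfl, rfl, fun i => i.elim0⟩

lemma ScaleChain.cons' {x y z : X} (hx : x ∈ Uset) (hd : d x y < s)
    (h : ScaleChain d s Uset y z) : ScaleChain d s Uset x z := by
  obtain ⟨nn, c, hmem, h0, hl, hstep⟩ := h
  refine ⟨nn + 1, Fin.cons x c, ?_, ?_, ?_, ?_⟩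
  · intro i
    refine Fin.cases ?_ ?_ i
    · exact hx
    · intro j
      rw [Fin.cons_succ]
      exact hmem j
  · rw [Fin.cons_zero]
  · rw [← Fin.succ_last, Fin.cons_succ]
    exact hl
  · intro i
    refine Fin.cases ?_ ?_ i
    · have e1 : (Fin.castSucc (0 : Fin (nn + 1))) = 0 := Fin.castSucc_zero
      have e2 : Fin.cons (α := fun _ => X) x c (Fin.castSucc (0 : Fin (nn + 1))) = x := by
        rw [e1, Fin.cons_zero]
      have e3 : Fin.cons (α := fun _ => X) x c ((0 : Fin (nn + 1)).succ) = y := by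
        rw [Fin.cons_succ, h0]
      rw [e2, e3]
      exact hd
    · intro j
      have e1 : Fin.cons (α := fun _ => X) x c (Fin.castSucc j.succ) = c (Fin.castSucc j) := by
        rw [← Fin.succ_castSucc, Fin.cons_succ]
      have e2 : Fin.cons (α := fun _ => X) x c (j.succ.succ) = c j.succ := by
        rw [Fin.cons_succ]
      rw [e1, e2]
      exact hstep j

end ChainLemmas

section MkLab

open Classical in
noncomputable def mkLab {n : ℕ} (χ : (Fin n → ℤ) → Fin n) (R : (Fin n → ℤ) → Prop) :
    (Fin n → ℤ) → Fin n × Bool := fun v => (χ v, if R v then false else true)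

lemma mkLab_fst {n : ℕ} {χ : (Fin n → ℤ) → Fin n} {R : (Fin n → ℤ) → Prop}
    {v : Fin n → ℤ} : (mkLab χ R v).1 = χ v := rfl

lemma mkLab_false {n : ℕ} {χ : (Fin n → ℤ) → Fin n} {R : (Fin n → ℤ) → Prop}
    {v : Fin n → ℤ} {i : Fin n} : mkLab χ R v = (i, false) ↔ χ v = i ∧ R v := by
  unfold mkLab
  split_ifs with h
  · simp [Prod.ext_iff, h]
  · simp [Prod.ext_iff, h]

lemma mkLab_true {n : ℕ} {χ : (Fin n → ℤ) → Fin n} {R : (Fin n → ℤ) → Prop}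
    {v : Fin n → ℤ} {i : Fin n} : mkLab χ R v = (i, true) ↔ χ v = i ∧ ¬ R v := by
  unfold mkLab
  split_ifs with h
  · simp [Prod.ext_iff, h]
  · simp [Prod.ext_iff, h]

lemma mkLab_snd_iff {n : ℕ} {χ : (Fin n → ℤ) → Fin n} {R : (Fin n → ℤ) → Prop}
    {u v : Fin n → ℤ} (h : R u ↔ R v) : (mkLab χ R u).2 = (mkLab χ R v).2 := by
  unfold mkLab
  by_cases hu : R u
  · rw [if_pos hu, if_pos (h.mp hu)]
  · rw [if_neg hu, if_neg (fun hc => hu (h.mpr hc))]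

end MkLab

theorem asdimAN_ge_of_dilatations' {X : Type*} [MetricSpace X] (n : ℕ) (hn : 1 ≤ n)
    (kseq : ℕ → ℕ) (hk : Filter.Tendsto kseq Filter.atTop Filter.atTop)
    (f : ℕ → (Fin n → ℤ) → X) (C : ℕ → ℝ) (hC : ∀ m, 1 ≤ C m)
    (hdil : ∀ m, ∀ x y : Fin n → ℤ,
      (∑ i, |x i|) ≤ (kseq m : ℤ) → (∑ i, |y i|) ≤ (kseq m : ℤ) →
      dist (f m x) (f m y) = C m * ((∑ i, |x i - y i| : ℤ) : ℝ)) :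
    ¬ ASDimANLe (dist : X → X → ℝ) (n - 1) := by
  classical
  intro hAS
  obtain ⟨C', hC', kk, hprop⟩ := hAS
  have hn1 : n - 1 + 1 = n := Nat.succ_pred_eq_of_pos hn
  rw [hn1] at hprop
  set K : ℝ := max kk 0 with hK
  have hkK : kk ≤ K := le_max_left _ _
  have hKnn : (0 : ℝ) ≤ K := le_max_right _ _
  set N : ℕ := ⌊C' * (n + 1) + K⌋₊ + 1 with hNdef
  have hN1 : 1 ≤ N := Nat.le_add_left 1 _
  have hNgt : C' * (n + 1) + K < (N : ℝ) := by
    have h := Nat.lt_floor_add_one (C' * (n + 1) + K)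
    rw [hNdef]
    push_cast
    exact h
  obtain ⟨M, hM⟩ := (hk.eventually_ge_atTop (n * N)).exists
  have hCM : 1 ≤ C M := hC M
  have hCMpos : (0 : ℝ) < C M := lt_of_lt_of_le one_pos hCM
  set s : ℝ := C M * (n + 1) with hs
  have hspos : 0 < s := by
    rw [hs]
    have : (0 : ℝ) < (n : ℝ) + 1 := by positivity
    exact mul_pos hCMpos this
  obtain ⟨U, hcov, hbound⟩ := hprop s hspos
  choose χ hχ using fun v : Fin n → ℤ => hcov (f M v)
  -- box facts
  have hsumbox : ∀ v : Fin n → ℤ, (∀ i, 0 ≤ v i ∧ v i ≤ N) → (∑ i, |v i|) ≤ (kseq M : ℤ) := by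
    intro v hv
    have h1 : (∑ i, |v i|) ≤ ∑ _i : Fin n, (N : ℤ) :=
      Finset.sum_le_sum (fun i _ => by
        have := hv i
        rw [abs_of_nonneg this.1]
        exact this.2)
    have h2 : (∑ _i : Fin n, (N : ℤ)) = ((n * N : ℕ) : ℤ) := by
      rw [Finset.sum_const, Finset.card_univ, Fintype.card_fin]
      push_cast
      ring
    have h3 : ((n * N : ℕ) : ℤ) ≤ (kseq M : ℤ) := by exact_mod_cast hM
    omega
  have hdist : ∀ u v : Fin n → ℤ, (∀ i, 0 ≤ u i ∧ u i ≤ N) → (∀ i, 0 ≤ v i ∧ v i ≤ N) →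
      dist (f M u) (f M v) = C M * ((∑ i, |u i - v i| : ℤ) : ℝ) :=
    fun u v hu hv => hdil M u v (hsumbox u hu) (hsumbox v hv)
  -- reachability of the top face within one color
  set Reach : (Fin n → ℤ) → Prop := fun v => ∃ w : Fin n → ℤ, (∀ i, 0 ≤ w i ∧ w i ≤ N) ∧
    w (χ v) = N ∧ ScaleChain dist s (U (χ v)) (f M v) (f M w) with hReach
  -- transfer of reachability between nearby points of the same color
  have htrans : ∀ a b : Fin n → ℤ, (∀ i, 0 ≤ a i ∧ a i ≤ N) → (∀ i, 0 ≤ b i ∧ b i ≤ N) →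
      χ a = χ b → (∑ i, |a i - b i|) ≤ (n : ℤ) → Reach b → Reach a := by
    rintro a b hab hbb hch hsum ⟨w, hw, hwN, hwch⟩
    refine ⟨w, hw, by rw [hch]; exact hwN, ?_⟩
    refine ScaleChain.cons' dist s (U (χ a)) (y := f M b) (hχ a) ?_ ?_
    · rw [hdist a b hab hbb]
      have h1 : C M * ((∑ i, |a i - b i| : ℤ) : ℝ) ≤ C M * (n : ℝ) := by
        refine mul_le_mul_of_nonneg_left ?_ hCMpos.le
        exact_mod_cast hsum
      have h2 : C M * (n : ℝ) < s := by
        rw [hs]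
        have : (n : ℝ) < (n : ℝ) + 1 := by linarith
        exact mul_lt_mul_of_pos_left this hCMpos
      linarith
    · rw [hch]
      exact hwch
  -- bottom-face points of their own color cannot reach the top face
  have hfar : ∀ v : Fin n → ℤ, (∀ i, 0 ≤ v i ∧ v i ≤ N) → ∀ i, v i = 0 → χ v = i →
      ¬ Reach v := by
    rintro v hv i hvi hchi ⟨w, hw, hwN, hwch⟩
    have hwiN : w i = (N : ℤ) := by rw [← hchi]; exact hwN
    have hb := hbound (χ v) (f M v) (f M w) hwch
    rw [hdist v w hv hw] at hb
    have h0 : |v i - w i| = (N : ℤ) := by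
      rw [hvi, hwiN]
      simp
    have hsge : (N : ℤ) ≤ ∑ j, |v j - w j| := by
      have h1 := Finset.single_le_sum (f := fun j => |v j - w j|) (fun j _ => abs_nonneg _)
        (Finset.mem_univ i)
      have h2 : |v i - w i| ≤ ∑ j, |v j - w j| := by simpa using h1
      omega
    have hDge : (N : ℝ) ≤ ((∑ j, |v j - w j| : ℤ) : ℝ) := by exact_mod_cast hsge
    have hle1 : C M * (N : ℝ) ≤ C' * s + kk :=
      le_trans (mul_le_mul_of_nonneg_left hDge hCMpos.le) hb
    have hle2 : C' * s + kk ≤ C M * (C' * (n + 1) + K) := by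
      have h1 : K ≤ C M * K := le_mul_of_one_le_left hKnn hCM
      calc C' * s + kk = C M * (C' * (n + 1)) + kk := by rw [hs]; ring
        _ ≤ C M * (C' * (n + 1)) + C M * K := by linarith
        _ = C M * (C' * (n + 1) + K) := by ring
    have hNle : (N : ℝ) ≤ C' * (n + 1) + K :=
      le_of_mul_le_mul_left (le_trans hle1 hle2) hCMpos
    linarith
  -- top-face points of their own color trivially reach the top face
  have hnear : ∀ v : Fin n → ℤ, (∀ i, 0 ≤ v i ∧ v i ≤ N) → ∀ i, v i = (N : ℤ) → χ v = i →
      Reach v := by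
    intro v hv i hvi hchi
    exact ⟨v, hv, by rw [hchi]; exact hvi, ScaleChain.refl' dist s (U (χ v)) (hχ v)⟩
  -- apply the discrete Poincaré–Miranda theorem
  refine AsdimProof.discretePM N hN1 (mkLab χ Reach) ?_ ?_ ?_
  · intro v hv i hvi hlabeq
    obtain ⟨h1, h2⟩ := mkLab_false.mp hlabeq
    exact hfar v hv i hvi h1 h2
  · intro v hv i hvi hlabeq
    obtain ⟨h1, h2⟩ := mkLab_true.mp hlabeq
    exact h2 (hnear v hv i hvi h1)
  · intro u v hu hv hcomp h1
    rw [mkLab_fst, mkLab_fst] at h1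
    have hsum_uv : (∑ i, |u i - v i|) ≤ (n : ℤ) := by
      have hone : ∀ i, |u i - v i| ≤ 1 := fun i => by
        have := hcomp i
        rw [abs_le]
        omega
      calc (∑ i, |u i - v i|) ≤ ∑ _i : Fin n, (1 : ℤ) :=
            Finset.sum_le_sum (fun i _ => hone i)
        _ = (n : ℤ) := by
            rw [Finset.sum_const, Finset.card_univ, Fintype.card_fin]
            simp
    have hsum_vu : (∑ i, |v i - u i|) ≤ (n : ℤ) := by
      rw [show (∑ i, |v i - u i|) = ∑ i, |u i - v i| from
        Finset.sum_congr rfl (fun i _ => abs_sub_comm _ _)]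
      exact hsum_uv
    refine mkLab_snd_iff ⟨fun hr => ?_, fun hr => ?_⟩
    · exact htrans v u hv hu h1.symm hsum_vu hr
    · exact htrans u v hu hv h1 hsum_uv hr


/-- A sequence of dilatations of `ℓ¹`-balls of `ℤⁿ` of radii tending to infinity
into `X` forces `asdim_AN X ≥ n`, i.e. `asdim_AN X ≤ n - 1` fails. -/
theorem asdimAN_ge_of_dilatations {X : Type*} [MetricSpace X] (n : ℕ) (hn : 1 ≤ n)
    (kseq : ℕ → ℕ) (hk : Filter.Tendsto kseq Filter.atTop Filter.atTop)
    (f : ℕ → (Fin n → ℤ) → X) (C : ℕ → ℝ) (hC : ∀ m, 1 ≤ C m)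
    (hdil : ∀ m, ∀ x y : Fin n → ℤ,
      (∑ i, |x i|) ≤ (kseq m : ℤ) → (∑ i, |y i|) ≤ (kseq m : ℤ) →
      dist (f m x) (f m y) = C m * ((∑ i, |x i - y i| : ℤ) : ℝ)) :
    ¬ ASDimANLe (dist : X → X → ℝ) (n - 1) :=
  asdimAN_ge_of_dilatations' n hn kseq hk f C hC hdil
end

section
/- Let G be a finitely generated group whose center contains an element of infinite order, and let d_G be a proper left-invariant metric on G. Then for all k, m, R ∈ ℕ there exists a proper left-invariant metric d_ω on G with associated norm ‖·‖_ω such that: (1) ‖g‖_ω ≤ ‖g‖_G for all g; (2) ‖g‖_G = ‖g‖_ω whenever ‖g‖_ω ≤ R; (3) there is a group homomorphism f : ℤᵐ → G whose restriction to the ℓ¹-ball B(0,k) ⊂ ℤᵐ is a dilatation into (G,d_ω). -/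
def IsProperLeftInvMetric {G : Type*} [Group G] (d : G → G → ℝ) : Prop :=
  (∀ x y, d x y = 0 ↔ x = y) ∧
  (∀ x y, d x y = d y x) ∧
  (∀ x y z, d x z ≤ d x y + d y z) ∧
  (∀ g x y, d (g * x) (g * y) = d x y) ∧
  (∀ K : ℝ, {g : G | d 1 g ≤ K}.Finite)

lemma aux_digits_ne_zero : ∀ (m : ℕ) (M : ℤ) (w : Fin m → ℤ), (∀ i, |w i| < M) → w ≠ 0 →
    (∑ i, w i * M ^ (i : ℕ)) ≠ 0 := by
  intro m
  induction m with
  | zero => intro M w _ hw; exact absurd (funext fun i => i.elim0) hw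
  | succ m ih =>
    intro M w hlt hw h0
    rw [Fin.sum_univ_succ] at h0
    have hM : 0 < M := lt_of_le_of_lt (abs_nonneg _) (hlt 0)
    have hrw : ∀ i : Fin m, w i.succ * M ^ (i.succ : ℕ) = M * (w i.succ * M ^ (i : ℕ)) := by
      intro i
      rw [Fin.val_succ, pow_succ]
      ring
    rw [Finset.sum_congr rfl (fun i _ => hrw i), ← Finset.mul_sum] at h0
    have hdvd : M ∣ w 0 := by
      refine ⟨-(∑ i : Fin m, w i.succ * M ^ (i : ℕ)), ?_⟩
      simp at h0 ⊢
      linarith [h0]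
    have hw0 : w 0 = 0 := by
      refine Int.eq_zero_of_dvd_of_natAbs_lt_natAbs hdvd ?_
      have h1 := hlt 0
      rw [Int.abs_eq_natAbs] at h1
      omega
    have hsum : (∑ i : Fin m, w i.succ * M ^ (i : ℕ)) = 0 := by
      rw [hw0] at h0
      simp at h0
      rcases h0 with h | h
      · omega
      · exact h
    refine ih M (fun i => w i.succ) (fun i => hlt i.succ) ?_ hsum
    intro hws
    apply hw
    funext i
    rcases Fin.eq_zero_or_eq_succ i with rfl | ⟨j, rfl⟩
    · exact hw0
    · exact congrFun hws j

/-- Inductive step (Lemma 4.1): given a proper left-invariant metric on a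
finitely generated group whose center has an element of infinite order, one can
modify it, keeping a large ball, so that a large `ℓ¹`-ball of `ℤᵐ` dilates into
the group. -/
theorem inductive_step {G : Type*} [Group G] (hFG : Group.FG G)
    (z : G) (hz : z ∈ Subgroup.center G) (hzord : ¬ IsOfFinOrder z)
    (dG : G → G → ℝ) (hdG : IsProperLeftInvMetric dG) :
    ∀ k m R : ℕ, ∃ dω : G → G → ℝ, IsProperLeftInvMetric dω ∧
      (∀ g : G, dω 1 g ≤ dG 1 g) ∧
      (∀ g : G, dω 1 g ≤ (R : ℝ) → dG 1 g = dω 1 g) ∧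
      (∃ f : (Fin m → ℤ) → G, (∀ x y : Fin m → ℤ, f (x + y) = f x * f y) ∧
        ∃ C : ℝ, 1 ≤ C ∧ ∀ x y : Fin m → ℤ,
          (∑ i, |x i|) ≤ (k : ℤ) → (∑ i, |y i|) ≤ (k : ℤ) →
          dω (f x) (f y) = C * ((∑ i, |x i - y i| : ℤ) : ℝ)) := by
  obtain ⟨hd0, hdsymm, hdtri, hdinv, hdfin⟩ := hdG
  intro k m R
  -- basic facts about dG
  have hnonneg : ∀ x y : G, 0 ≤ dG x y := by
    intro x y
    have h1 : dG x x = 0 := (hd0 x x).mpr rfl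
    have h2 := hdtri x y x
    rw [h1, hdsymm y x] at h2
    linarith
  have hnorm_eq : ∀ x y : G, dG x y = dG 1 (x⁻¹ * y) := by
    intro x y
    rw [← hdinv x⁻¹ x y, inv_mul_cancel]
  have hnorm_inv : ∀ g : G, dG 1 g⁻¹ = dG 1 g := by
    intro g
    rw [hdsymm, hnorm_eq g⁻¹ 1]
    simp
  have hnorm_mul : ∀ a b : G, dG 1 (a * b) ≤ dG 1 a + dG 1 b := by
    intro a b
    have h1 := hdtri 1 a (a * b)
    have h2 : dG a (a * b) = dG 1 b := by
      rw [hnorm_eq a (a * b)]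
      simp
    linarith
  -- centrality of powers of z
  have hzc : ∀ (j : ℤ) (g : G), z ^ j * g = g * z ^ j := by
    intro j g
    have hmem : z ^ j ∈ Subgroup.center G := Subgroup.zpow_mem _ hz j
    exact (Subgroup.mem_center_iff.mp hmem g).symm
  -- setup
  set M : ℤ := 8 * (k : ℤ) + 1 with hM
  set C : ℝ := (R : ℝ) + 1 with hC
  have hC1 : (1 : ℝ) ≤ C := by
    rw [hC]
    have : (0 : ℝ) ≤ (R : ℝ) := Nat.cast_nonneg R
    linarith
  have hC0 : (0 : ℝ) ≤ C := by linarith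
  set n : (Fin m → ℤ) → ℤ := fun u => ∑ i, u i * M ^ (i : ℕ) with hn
  have hnadd : ∀ u v, n (u + v) = n u + n v := by
    intro u v
    simp only [hn, Pi.add_apply, add_mul, Finset.sum_add_distrib]
  have hn0 : n 0 = 0 := by simp [hn]
  have hnneg : ∀ u, n (-u) = - n u := by
    intro u
    have := hnadd (-u) u
    simp at this
    linarith
  have habs_le : ∀ (u : Fin m → ℤ) i, |u i| ≤ ∑ j, |u j| :=
    fun u i => Finset.single_le_sum (f := fun j => |u j|) (fun j _ => abs_nonneg _) (Finset.mem_univ i)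
  -- injectivity of n on the ball of radius 2k
  have hninj : ∀ u v : Fin m → ℤ, (∑ i, |u i|) ≤ 2 * (k : ℤ) → (∑ i, |v i|) ≤ 2 * (k : ℤ) →
      n u = n v → u = v := by
    intro u v hu hv huv
    by_contra hne
    have hw : (u - v) ≠ 0 := sub_ne_zero.mpr hne
    have hbound : ∀ i, |(u - v) i| < M := by
      intro i
      have h1 := habs_le u i
      have h2 := habs_le v i
      have h3 : |u i - v i| ≤ |u i| + |v i| := by
        have := abs_add_le (u i) (-(v i))
        simpa [sub_eq_add_neg] using this
      have : (u - v) i = u i - v i := rfl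
      rw [this, hM]
      omega
    have hsum0 : (∑ i, (u - v) i * M ^ (i : ℕ)) = 0 := by
      have h4 : n (u - v) = n u - n v := by
        have := hnadd u (-v)
        rw [hnneg] at this
        have h5 : u + -v = u - v := by funext i; simp [sub_eq_add_neg]
        rw [h5] at this
        linarith
      have h6 : n (u - v) = 0 := by rw [h4, huv]; ring
      exact h6
    exact aux_digits_ne_zero m M (u - v) hbound hw hsum0
  -- choose t using properness
  have hinjz : Function.Injective fun j : ℤ => z ^ j :=
    injective_zpow_iff_not_isOfFinOrder.mpr hzord
  have hJfin : {j : ℤ | dG 1 (z ^ j) ≤ 2 * (k : ℝ) * C}.Finite := by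
    have h1 := hdfin (2 * (k : ℝ) * C)
    exact Set.Finite.preimage (hinjz.injOn) h1
  obtain ⟨T, hT⟩ : ∃ T : ℕ, ∀ j ∈ {j : ℤ | dG 1 (z ^ j) ≤ 2 * (k : ℝ) * C}, j.natAbs < T := by
    refine ⟨hJfin.toFinset.sup (fun j => j.natAbs) + 1, ?_⟩
    intro j hj
    have h1 : j.natAbs ≤ hJfin.toFinset.sup (fun j => j.natAbs) :=
      Finset.le_sup (f := fun j : ℤ => j.natAbs) (hJfin.mem_toFinset.mpr hj)
    omega
  set t : ℤ := (T : ℤ) + 1 with ht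
  have hkey : ∀ d : ℤ, d ≠ 0 → 2 * (k : ℝ) * C < dG 1 (z ^ (t * d)) := by
    intro d hd
    by_contra hle
    push_neg at hle
    have h1 := hT (t * d) hle
    have h2 : (t * d).natAbs = t.natAbs * d.natAbs := Int.natAbs_mul _ _
    have h3 : t.natAbs = T + 1 := by omega
    have h4 : 1 ≤ d.natAbs := by omega
    have h5 : T + 1 ≤ (T + 1) * d.natAbs := Nat.le_mul_of_pos_right _ h4
    have h6 : T + 1 ≤ (t * d).natAbs := by rw [h2, h3]; exact h5
    omega
  -- the homomorphism
  set f : (Fin m → ℤ) → G := fun u => z ^ (t * n u) with hf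
  have hfadd : ∀ u v, f (u + v) = f u * f v := by
    intro u v
    simp only [hf, hnadd, mul_add, zpow_add]
  have hfneg : ∀ u, f (-u) = (f u)⁻¹ := by
    intro u
    simp only [hf, hnneg, mul_neg, zpow_neg]
  have hf0 : f 0 = 1 := by simp [hf, hn0]
  have hfc : ∀ u (g : G), f u * g = g * f u := fun u g => hzc _ g
  -- the ℓ¹ norm
  set L : (Fin m → ℤ) → ℝ := fun u => ((∑ i, |u i| : ℤ) : ℝ) with hL
  have hLnonneg : ∀ u, 0 ≤ L u := by
    intro u
    simp only [hL]
    exact_mod_cast Finset.sum_nonneg (fun i _ => abs_nonneg _)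
  have hL0 : L 0 = 0 := by simp [hL]
  have hLadd : ∀ u v, L (u + v) ≤ L u + L v := by
    intro u v
    simp only [hL]
    have h1 : (∑ i, |(u + v) i|) ≤ (∑ i, |u i|) + ∑ i, |v i| := by
      rw [← Finset.sum_add_distrib]
      exact Finset.sum_le_sum (fun i _ => abs_add_le (u i) (v i))
    exact_mod_cast h1
  have hLneg : ∀ u, L (-u) = L u := by
    intro u
    simp [hL]
  have hL1 : ∀ u, u ≠ 0 → 1 ≤ L u := by
    intro u hu
    obtain ⟨i, hi⟩ := Function.ne_iff.mp hu
    have h1 : 1 ≤ |u i| := by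
      have h0 : u i ≠ 0 := hi
      have h2 : 0 < |u i| := abs_pos.mpr h0
      omega
    have h2 := habs_le u i
    simp only [hL]
    exact_mod_cast le_trans h1 h2
  -- the new metric
  set Φ : (Fin m → ℤ) → G → ℝ := fun u g => C * L u + dG 1 ((f u)⁻¹ * g) with hΦ
  have hΦnonneg : ∀ u g, 0 ≤ Φ u g :=
    fun u g => add_nonneg (mul_nonneg hC0 (hLnonneg u)) (hnonneg _ _)
  set ψ : G → ℝ := fun g => sInf (Set.range (fun u => Φ u g)) with hψ
  have hbdd : ∀ g, BddBelow (Set.range (fun u => Φ u g)) := by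
    intro g
    refine ⟨0, ?_⟩
    rintro x ⟨u, rfl⟩
    exact hΦnonneg u g
  have hne : ∀ g : G, (Set.range (fun u => Φ u g)).Nonempty := fun g => ⟨Φ 0 g, ⟨0, rfl⟩⟩
  have hψle : ∀ u (g : G), ψ g ≤ Φ u g := fun u g => csInf_le (hbdd g) ⟨u, rfl⟩
  have hψge : ∀ (g : G) (c : ℝ), (∀ u, c ≤ Φ u g) → c ≤ ψ g := by
    intro g c h
    refine le_csInf (hne g) ?_
    rintro x ⟨u, rfl⟩
    exact h u
  have hψnonneg : ∀ g, 0 ≤ ψ g := fun g => hψge g 0 (fun u => hΦnonneg u g)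
  have hΦ0 : ∀ g, Φ 0 g = dG 1 g := by
    intro g
    simp [hΦ, hf0, hL0]
  have hψle_norm : ∀ g, ψ g ≤ dG 1 g := fun g => (hψle 0 g).trans_eq (hΦ0 g)
  have hmin_le : ∀ g, min (dG 1 g) C ≤ ψ g := by
    intro g
    apply hψge
    intro u
    by_cases hu : u = 0
    · subst hu
      rw [hΦ0]
      exact min_le_left _ _
    · have h1 := hL1 u hu
      calc min (dG 1 g) C ≤ C := min_le_right _ _
        _ ≤ C * L u := le_mul_of_one_le_right hC0 h1
        _ ≤ Φ u g := le_add_of_nonneg_right (hnonneg _ _)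
  have hψ0iff : ∀ g, ψ g = 0 ↔ g = 1 := by
    intro g
    constructor
    · intro h
      have h1 := hmin_le g
      rw [h] at h1
      rcases min_le_iff.mp h1 with h2 | h2
      · exact ((hd0 1 g).mp (le_antisymm h2 (hnonneg _ _))).symm
      · linarith
    · rintro rfl
      refine le_antisymm ?_ (hψnonneg 1)
      have := hψle_norm 1
      rw [(hd0 1 1).mpr rfl] at this
      exact this
  -- symmetry
  have hψinv : ∀ g : G, ψ g⁻¹ ≤ ψ g := by
    intro g
    apply hψge
    intro u
    have h1 : (f (-u))⁻¹ * g⁻¹ = ((f u)⁻¹ * g)⁻¹ := by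
      rw [hfneg, inv_inv, mul_inv_rev, inv_inv]
      exact hfc u g⁻¹
    calc ψ g⁻¹ ≤ Φ (-u) g⁻¹ := hψle _ _
      _ = Φ u g := by rw [hΦ]; simp only [hLneg, h1, hnorm_inv]
  have hψsymm : ∀ g : G, ψ g⁻¹ = ψ g := by
    intro g
    refine le_antisymm (hψinv g) ?_
    have := hψinv g⁻¹
    rwa [inv_inv] at this
  -- subadditivity
  have hfc' : ∀ u (x : G), (f u)⁻¹ * x = x * (f u)⁻¹ := by
    intro u x
    rw [← hfneg]
    exact hfc (-u) x
  have hψadd : ∀ a b : G, ψ (a * b) ≤ ψ a + ψ b := by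
    intro a b
    have key : ∀ u v, ψ (a * b) ≤ Φ u a + Φ v b := by
      intro u v
      have h1 : (f (u + v))⁻¹ * (a * b) = ((f u)⁻¹ * a) * ((f v)⁻¹ * b) := by
        rw [hfadd, mul_inv_rev, hfc' v ((f u)⁻¹), mul_assoc, mul_assoc]
        congr 1
        rw [← mul_assoc, hfc' v a, mul_assoc]
      have h2 : Φ (u + v) (a * b) ≤ Φ u a + Φ v b := by
        show C * L (u + v) + dG 1 ((f (u + v))⁻¹ * (a * b)) ≤
          (C * L u + dG 1 ((f u)⁻¹ * a)) + (C * L v + dG 1 ((f v)⁻¹ * b))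
        rw [h1]
        have h3 := hnorm_mul ((f u)⁻¹ * a) ((f v)⁻¹ * b)
        have h4 := mul_le_mul_of_nonneg_left (hLadd u v) hC0
        calc C * L (u + v) + dG 1 (((f u)⁻¹ * a) * ((f v)⁻¹ * b))
            ≤ C * (L u + L v) + (dG 1 ((f u)⁻¹ * a) + dG 1 ((f v)⁻¹ * b)) := add_le_add h4 h3
          _ = (C * L u + dG 1 ((f u)⁻¹ * a)) + (C * L v + dG 1 ((f v)⁻¹ * b)) := by ring
      exact (hψle (u + v) (a * b)).trans h2
    have step1 : ∀ u, ψ (a * b) - Φ u a ≤ ψ b := by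
      intro u
      refine hψge b _ ?_
      intro v
      linarith [key u v]
    have step2 : ψ (a * b) - ψ b ≤ ψ a := by
      refine hψge a _ ?_
      intro u
      linarith [step1 u]
    linarith
  -- exactness on the ball
  have hψf : ∀ v : Fin m → ℤ, (∑ i, |v i|) ≤ 2 * (k : ℤ) → ψ (f v) = C * L v := by
    intro v hv
    refine le_antisymm ?_ ?_
    · have h1 := hψle v (f v)
      have h2 : Φ v (f v) = C * L v := by
        rw [hΦ]
        simp only [inv_mul_cancel]
        rw [(hd0 1 1).mpr rfl]
        ring
      rwa [h2] at h1
    · apply hψge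
      intro u
      rcases le_or_gt (L v) (L u) with h | h
      · have h1 : C * L v ≤ C * L u := mul_le_mul_of_nonneg_left h hC0
        exact h1.trans (le_add_of_nonneg_right (hnonneg _ _))
      · have hu2k : (∑ i, |u i|) ≤ 2 * (k : ℤ) := by
          have h' := h
          simp only [hL] at h'
          have h1 : (∑ i, |u i|) < (∑ i, |v i|) := by exact_mod_cast h'
          omega
        have hnuv : n u ≠ n v := by
          intro he
          rw [hninj u v hu2k hv he] at h
          exact lt_irrefl _ h
        have hdne : n v - n u ≠ 0 := sub_ne_zero.mpr (Ne.symm hnuv)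
        have harg : (f u)⁻¹ * f v = z ^ (t * (n v - n u)) := by
          rw [hf]
          simp only [← zpow_neg, ← zpow_add]
          congr 1
          ring
        have h2 := hkey (n v - n u) hdne
        rw [hΦ]
        simp only [harg]
        have hLv : L v ≤ 2 * (k : ℝ) := by
          have : ((∑ i, |v i| : ℤ) : ℝ) ≤ ((2 * (k : ℤ) : ℤ) : ℝ) := by exact_mod_cast hv
          rw [hL]
          push_cast at this ⊢
          linarith
        have h3 : C * L v ≤ C * (2 * (k : ℝ)) := mul_le_mul_of_nonneg_left hLv hC0
        have h4 : C * (2 * (k : ℝ)) = 2 * (k : ℝ) * C := by ring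
        have h5 : 0 ≤ C * L u := mul_nonneg hC0 (hLnonneg u)
        linarith
  -- properness
  have hproper : ∀ K : ℝ, {g : G | ψ g ≤ K}.Finite := by
    intro K
    set B' : ℕ := ⌈K⌉₊ + 1 with hB'
    have hKB : K + 1 ≤ (B' : ℝ) := by
      have := Nat.le_ceil K
      rw [hB']
      push_cast
      linarith
    set U : Set (Fin m → ℤ) := Set.pi Set.univ (fun _ : Fin m => Set.Icc (-(B' : ℤ)) (B' : ℤ))
      with hU
    have hUfin : U.Finite := Set.Finite.pi (fun i => Set.finite_Icc _ _)
    have hGfin := hdfin (K + 1)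
    apply Set.Finite.subset
      (Set.Finite.image (fun p : (Fin m → ℤ) × G => f p.1 * p.2) (hUfin.prod hGfin))
    intro g hg
    have h2 : ψ g < K + 1 := lt_of_le_of_lt hg (by linarith)
    rw [hψ] at h2
    obtain ⟨x, hx, hxlt⟩ := exists_lt_of_csInf_lt (hne g) h2
    obtain ⟨u, rfl⟩ := hx
    have hL' : C * L u < K + 1 :=
      lt_of_le_of_lt (le_add_of_nonneg_right (hnonneg _ _)) hxlt
    have hLu : L u ≤ K + 1 := by
      have := le_mul_of_one_le_left (hLnonneg u) hC1
      linarith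
    have hxlt' : Φ u g < K + 1 := hxlt
    have hdGu : dG 1 ((f u)⁻¹ * g) ≤ K + 1 := by
      have h7 := mul_nonneg hC0 (hLnonneg u)
      have h6 : dG 1 ((f u)⁻¹ * g) ≤ Φ u g := le_add_of_nonneg_left h7
      exact h6.trans (le_of_lt hxlt')
    refine ⟨(u, (f u)⁻¹ * g), ⟨?_, hdGu⟩, ?_⟩
    · rw [hU]
      intro i _
      simp only [Set.mem_Icc]
      have h3 := habs_le u i
      have h4 : ((∑ j, |u j| : ℤ) : ℝ) ≤ (B' : ℝ) := by
        rw [hL] at hLu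
        linarith
      have h5 : (∑ j, |u j|) ≤ (B' : ℤ) := by exact_mod_cast h4
      have h6 : |u i| ≤ (B' : ℤ) := le_trans h3 h5
      exact abs_le.mp h6
    · simp
  -- assemble
  refine ⟨fun x y => ψ (x⁻¹ * y), ⟨?_, ?_, ?_, ?_, ?_⟩, ?_, ?_, f, hfadd, C, hC1, ?_⟩
  · intro x y
    show ψ (x⁻¹ * y) = 0 ↔ x = y
    rw [hψ0iff]
    exact inv_mul_eq_one
  · intro x y
    show ψ (x⁻¹ * y) = ψ (y⁻¹ * x)
    have h1 : (x⁻¹ * y)⁻¹ = y⁻¹ * x := by simp [mul_inv_rev]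
    rw [← hψsymm (x⁻¹ * y), h1]
  · intro x y w
    show ψ (x⁻¹ * w) ≤ ψ (x⁻¹ * y) + ψ (y⁻¹ * w)
    have := hψadd (x⁻¹ * y) (y⁻¹ * w)
    have h1 : (x⁻¹ * y) * (y⁻¹ * w) = x⁻¹ * w := by
      simp [mul_assoc]
    rwa [h1] at this
  · intro g x y
    show ψ ((g * x)⁻¹ * (g * y)) = ψ (x⁻¹ * y)
    have h1 : (g * x)⁻¹ * (g * y) = x⁻¹ * y := by
      simp [mul_inv_rev, mul_assoc]
    rw [h1]
  · intro K
    have h1 : {g : G | ψ ((1 : G)⁻¹ * g) ≤ K} = {g : G | ψ g ≤ K} := by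
      simp
    rw [h1]
    exact hproper K
  · intro g
    have := hψle_norm g
    simpa using this
  · intro g h
    simp only [inv_one, one_mul] at h ⊢
    have h1 := hmin_le g
    rcases le_total (dG 1 g) C with h3 | h3
    · rw [min_eq_left h3] at h1
      exact le_antisymm h1 (hψle_norm g)
    · exfalso
      rw [min_eq_right h3] at h1
      rw [hC] at h1
      linarith
  · intro x y hx hy
    have h1 : (f x)⁻¹ * f y = f (y - x) := by
      rw [← hfneg, ← hfadd]
      congr 1
      funext i
      simp [sub_eq_add_neg, add_comm]
    have h2 : (∑ i, |(y - x) i|) ≤ 2 * (k : ℤ) := by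
      have h3 : ∀ i, |(y - x) i| ≤ |y i| + |x i| := by
        intro i
        have : (y - x) i = y i - x i := rfl
        rw [this]
        have := abs_add_le (y i) (-(x i))
        simpa [sub_eq_add_neg] using this
      have h4 : (∑ i, |(y - x) i|) ≤ (∑ i, |y i|) + ∑ i, |x i| := by
        rw [← Finset.sum_add_distrib]
        exact Finset.sum_le_sum (fun i _ => h3 i)
      omega
    show ψ ((f x)⁻¹ * f y) = C * ((∑ i, |x i - y i| : ℤ) : ℝ)
    rw [h1, hψf _ h2]
    have h3 : L (y - x) = ((∑ i, |x i - y i| : ℤ) : ℝ) := by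
      simp only [hL]
      congr 1
      refine Finset.sum_congr rfl ?_
      intro i _
      have h4 : (y - x) i = y i - x i := rfl
      rw [h4, abs_sub_comm]
    rw [h3]
end

section
/- There exists a proper left-invariant metric d on ℤ such that asdim_AN(ℤ, d) = ∞. In particular, the Assouad-Nagata dimension of (ℤ,d) is not equal to 1 for every proper left-invariant metric d. -/
def IsProperInvMetricZ (d : ℤ → ℤ → ℝ) : Prop :=
  (∀ x y, d x y = 0 ↔ x = y) ∧
  (∀ x y, d x y = d y x) ∧
  (∀ x y z, d x z ≤ d x y + d y z) ∧
  (∀ a x y, d (a + x) (a + y) = d x y) ∧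
  (∀ K : ℝ, {n : ℤ | d 0 n ≤ K}.Finite)
namespace ZMet
open Combinatorics Finset

/-! ### Hales-Jewett on Fin types -/

theorem exists_hj (k m : ℕ) : ∃ N : ℕ, ∀ C : (Fin N → Fin k) → Fin m,
    ∃ l : Line (Fin k) (Fin N), l.IsMono C := by
  obtain ⟨ι, hfin, hι⟩ := Line.exists_mono_in_high_dimension (Fin k) (Fin m)
  refine ⟨@Fintype.card ι hfin, ?_⟩
  intro C
  letI := hfin
  let e : ι ≃ Fin (Fintype.card ι) := Fintype.equivFin ι
  obtain ⟨l, c, hc⟩ := hι (fun v => C (v ∘ e.symm))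
  refine ⟨⟨l.idxFun ∘ e.symm, ?_⟩, c, ?_⟩
  · obtain ⟨i, hi⟩ := l.proper
    exact ⟨e i, by simp [hi]⟩
  · intro x
    have h2 : C ((l x) ∘ e.symm) = c := hc x
    exact h2

noncomputable def HJN (k m : ℕ) : ℕ := (exists_hj k m).choose

theorem HJN_spec (k m : ℕ) : ∀ C : (Fin (HJN k m) → Fin k) → Fin m,
    ∃ l : Line (Fin k) (Fin (HJN k m)), l.IsMono C := (exists_hj k m).choose_spec

/-! ### A sequence of pairwise coprime numbers, all `≥ b + 2` -/

def copAux (b : ℕ) : ℕ → ℕ × ℕ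
  | 0 => (b + 2, b + 2)
  | i + 1 => ((copAux b i).2 + 1, (copAux b i).2 * ((copAux b i).2 + 1))

def cop (b i : ℕ) : ℕ := (copAux b i).1

lemma copAux_snd_ge (b : ℕ) : ∀ i, b + 2 ≤ (copAux b i).2 := by
  intro i
  induction i with
  | zero => simp [copAux]
  | succ i ih =>
      have : 1 ≤ (copAux b i).2 := by omega
      calc b + 2 ≤ (copAux b i).2 := ih
        _ = (copAux b i).2 * 1 := by ring
        _ ≤ (copAux b i).2 * ((copAux b i).2 + 1) := by
            exact Nat.mul_le_mul_left _ (by omega)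
        _ = (copAux b (i+1)).2 := rfl

lemma cop_ge (b i : ℕ) : b + 2 ≤ cop b i := by
  cases i with
  | zero => simp [cop, copAux]
  | succ i => have := copAux_snd_ge b i; simp [cop, copAux]; omega

lemma cop_dvd_prod (b : ℕ) {i t : ℕ} (h : i ≤ t) : cop b i ∣ (copAux b t).2 := by
  induction t with
  | zero =>
      interval_cases i
      simp [cop, copAux]
  | succ t ih =>
      rcases Nat.lt_or_ge i (t+1) with h1 | h1
      · have := ih (by omega)
        exact this.mul_right _
      · have : i = t + 1 := by omega
        subst this
        show cop b (t+1) ∣ (copAux b t).2 * ((copAux b t).2 + 1)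
        have : cop b (t+1) = (copAux b t).2 + 1 := rfl
        rw [this]
        exact Dvd.dvd.mul_left dvd_rfl _

lemma cop_coprime (b : ℕ) {i j : ℕ} (h : i < j) : Nat.Coprime (cop b i) (cop b j) := by
  obtain ⟨t, rfl⟩ : ∃ t, j = t + 1 := ⟨j - 1, by omega⟩
  have h1 : cop b i ∣ (copAux b t).2 := cop_dvd_prod b (by omega)
  have h2 : cop b (t+1) = (copAux b t).2 + 1 := rfl
  have hg : Nat.gcd (cop b i) (cop b (t+1)) ∣ 1 := by
    have d1 : Nat.gcd (cop b i) (cop b (t+1)) ∣ (copAux b t).2 :=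
      (Nat.gcd_dvd_left _ _).trans h1
    have d2 : Nat.gcd (cop b i) (cop b (t+1)) ∣ (copAux b t).2 + 1 := by
      rw [← h2]; exact Nat.gcd_dvd_right _ _
    have := Nat.dvd_sub d2 d1
    simpa using this
  exact Nat.eq_one_of_dvd_one hg

lemma cop_coprime' (b : ℕ) {i j : ℕ} (h : i ≠ j) : Nat.Coprime (cop b i) (cop b j) := by
  rcases Nat.lt_or_ge i j with h1 | h1
  · exact cop_coprime b h1
  · exact (cop_coprime b (by omega)).symm


/-! ### Level parameters -/

def qual (ℓ : ℕ) : ℕ := ℓ.unpair.2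
def mcol (ℓ : ℕ) : ℕ := ℓ.unpair.1 + 1
/-- target lower bound for the metric at the bad scale -/
def TT (ℓ r : ℕ) : ℕ := (qual ℓ + 1) * (r + 1)
/-- coordinate spread needed -/
def LL (ℓ r : ℕ) : ℕ := (r + 1) * TT ℓ r + 1
/-- HJ dimension of the level -/
noncomputable def nnF (ℓ r : ℕ) : ℕ := HJN (LL ℓ r + 1) (mcol ℓ)
/-- pairwise coprime moduli of the level -/
noncomputable def QQ (ℓ r i : ℕ) : ℕ := cop (2 * (LL ℓ r + 1)) i

theorem exists_uu (ℓ r i : ℕ) : ∃ u : ℕ,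
    ((QQ ℓ r i : ℤ) ∣ (u : ℤ) - 1) ∧
    ∀ j, j < nnF ℓ r → j ≠ i → (QQ ℓ r j : ℤ) ∣ (u : ℤ) := by
  classical
  set P := ∏ j ∈ (Finset.range (nnF ℓ r)).erase i, QQ ℓ r j with hP
  have hco : Nat.Coprime (QQ ℓ r i) P := by
    apply Nat.Coprime.prod_right
    intro j hj
    have : j ≠ i := (Finset.mem_erase.mp hj).1
    exact cop_coprime' _ (fun h => this h.symm)
  obtain ⟨u, hu1, hu2⟩ := Nat.chineseRemainder hco 1 0
  refine ⟨u, ?_, ?_⟩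
  · have := hu1.dvd
    -- (QQ i : ℤ) ∣ u - 1  from 1 ≡ u? direction: hu1 : u ≡ 1 [MOD QQ i]
    -- Nat.ModEq.dvd : a ≡ b [MOD n] → (n:ℤ) ∣ (b:ℤ) - (a:ℤ)
    -- here a = u, b = 1 : ∣ 1 - u ; we need ∣ u - 1
    have h2 : ((QQ ℓ r i : ℤ)) ∣ (1 : ℤ) - (u : ℤ) := by exact_mod_cast this
    have := h2.neg_right
    simpa using this
  · intro j hj hji
    have hdvdP : (QQ ℓ r j) ∣ P := by
      apply Finset.dvd_prod_of_mem
      exact Finset.mem_erase.mpr ⟨hji, Finset.mem_range.mpr hj⟩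
    have hPu : P ∣ u := by
      have := (Nat.modEq_zero_iff_dvd).mp hu2
      exact this
    exact_mod_cast Int.natCast_dvd_natCast.mpr (hdvdP.trans hPu)

noncomputable def uu (ℓ r i : ℕ) : ℕ := (exists_uu ℓ r i).choose

theorem uu_one' (ℓ r i : ℕ) : (QQ ℓ r i : ℤ) ∣ (uu ℓ r i : ℤ) - 1 :=
  (exists_uu ℓ r i).choose_spec.1

theorem uu_zero' (ℓ r : ℕ) {i j : ℕ} (hj : j < nnF ℓ r) (hji : j ≠ i) :
    (QQ ℓ r j : ℤ) ∣ (uu ℓ r i : ℤ) :=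
  (exists_uu ℓ r i).choose_spec.2 j hj hji

/-- bound for the sizes of level generators -/
noncomputable def SS (ℓ r : ℕ) : ℕ := (∑ i ∈ Finset.range (nnF ℓ r), uu ℓ r i) + 1

/-- the recursive weight sequence: `Rf ℓ` is the weight of level `ℓ` generators. -/
noncomputable def Rf : ℕ → ℕ
  | 0 => 1
  | ℓ + 1 => max (Rf ℓ + 1) (SS ℓ (Rf ℓ) + TT ℓ (Rf ℓ) + 1)

lemma Rf_pos (ℓ : ℕ) : 1 ≤ Rf ℓ := by
  cases ℓ with
  | zero => simp [Rf]
  | succ ℓ => simp only [Rf]; omega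

lemma Rf_lt_succ (ℓ : ℕ) : Rf ℓ < Rf (ℓ + 1) := by
  simp only [Rf]; omega

lemma Rf_strictMono : StrictMono Rf := strictMono_nat_of_lt_succ Rf_lt_succ

lemma Rf_mono : Monotone Rf := Rf_strictMono.monotone

/-! canonical level data (at the canonical weight) -/

noncomputable abbrev W (ℓ : ℕ) : ℕ := Rf ℓ
noncomputable abbrev Tq (ℓ : ℕ) : ℕ := TT ℓ (W ℓ)
noncomputable abbrev Lam (ℓ : ℕ) : ℕ := LL ℓ (W ℓ)
noncomputable abbrev NN (ℓ : ℕ) : ℕ := nnF ℓ (W ℓ)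
noncomputable abbrev pp (ℓ i : ℕ) : ℕ := QQ ℓ (W ℓ) i
noncomputable abbrev ug (ℓ i : ℕ) : ℕ := uu ℓ (W ℓ) i

lemma Tq_pos (ℓ : ℕ) : 2 ≤ Tq ℓ := by
  have h : 1 ≤ W ℓ := Rf_pos ℓ
  calc (2:ℕ) = 1 * 2 := by norm_num
    _ ≤ (qual ℓ + 1) * (W ℓ + 1) := Nat.mul_le_mul (by omega) (by omega)

lemma Lam_eq (ℓ : ℕ) : Lam ℓ = (W ℓ + 1) * Tq ℓ + 1 := rfl

lemma pp_ge (ℓ i : ℕ) : 2 * (Lam ℓ + 1) + 2 ≤ pp ℓ i := cop_ge _ i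

/-- generators of later levels are too expensive -/
lemma later_expensive (ℓ ℓ' : ℕ) (h : ℓ < ℓ') : SS ℓ (W ℓ) + TT ℓ (W ℓ) + 1 ≤ W ℓ' := by
  calc SS ℓ (W ℓ) + TT ℓ (W ℓ) + 1 ≤ Rf (ℓ + 1) := le_max_right _ _
    _ ≤ Rf ℓ' := Rf_mono h



lemma Rf_ge (ℓ : ℕ) : ℓ + 1 ≤ Rf ℓ := by
  induction ℓ with
  | zero => simp [Rf]
  | succ ℓ ih =>
      have := Rf_lt_succ ℓ
      omega

lemma mcol_def (ℓ : ℕ) : mcol ℓ = ℓ.unpair.1 + 1 := rfl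
lemma qual_def (ℓ : ℕ) : qual ℓ = ℓ.unpair.2 := rfl
lemma Tq_eq (ℓ : ℕ) : Tq ℓ = (qual ℓ + 1) * (W ℓ + 1) := rfl

noncomputable abbrev SSb (ℓ : ℕ) : ℕ := SS ℓ (W ℓ)

lemma SSb_def (ℓ : ℕ) : SSb ℓ = (∑ i ∈ Finset.range (NN ℓ), ug ℓ i) + 1 := rfl

lemma SSb_le_Rf_succ (ℓ : ℕ) : SSb ℓ ≤ Rf (ℓ + 1) := by
  have h : SS ℓ (Rf ℓ) + TT ℓ (Rf ℓ) + 1 ≤ Rf (ℓ + 1) := le_max_right _ _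
  have h2 : SSb ℓ = SS ℓ (Rf ℓ) := rfl
  omega

lemma later_expensive' (ℓ ℓ' : ℕ) (h : ℓ < ℓ') : SSb ℓ + Tq ℓ + 1 ≤ W ℓ' :=
  later_expensive ℓ ℓ' h

theorem HJ_level (ℓ : ℕ) : ∀ C : (Fin (NN ℓ) → Fin (Lam ℓ + 1)) → Fin (mcol ℓ),
    ∃ l : Line (Fin (Lam ℓ + 1)) (Fin (NN ℓ)), l.IsMono C :=
  HJN_spec (Lam ℓ + 1) (mcol ℓ)

theorem uu_one (ℓ i : ℕ) : (pp ℓ i : ℤ) ∣ (ug ℓ i : ℤ) - 1 := uu_one' ℓ (W ℓ) i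

theorem uu_zero (ℓ : ℕ) {i j : ℕ} (hj : j < NN ℓ) (hji : j ≠ i) :
    (pp ℓ j : ℤ) ∣ (ug ℓ i : ℤ) := uu_zero' ℓ (W ℓ) hj hji


/-! ### The word norm -/

def MvLevel (ℓ : ℕ) : Set ℤ :=
  {z | ∃ ε : ℕ → ℤ, (∀ i, |ε i| ≤ 1) ∧ z = ∑ i ∈ Finset.range (NN ℓ), ε i * (ug ℓ i : ℤ)}

def IsMv (mv : ℤ × ℕ) : Prop :=
  (mv.2 = 1 ∧ (mv.1 = 1 ∨ mv.1 = -1)) ∨ ∃ ℓ, mv.2 = W ℓ ∧ mv.1 ∈ MvLevel ℓ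

def wval (L : List (ℤ × ℕ)) : ℤ := (L.map Prod.fst).sum
def wcost (L : List (ℤ × ℕ)) : ℕ := (L.map Prod.snd).sum

def Rep (z : ℤ) (K : ℕ) : Prop :=
  ∃ L : List (ℤ × ℕ), (∀ mv ∈ L, IsMv mv) ∧ wval L = z ∧ wcost L = K

noncomputable def gn (z : ℤ) : ℕ := sInf {K | Rep z K}

noncomputable def dZ (x y : ℤ) : ℝ := (gn (x - y) : ℝ)

lemma mv_cost_pos {mv : ℤ × ℕ} (h : IsMv mv) : 1 ≤ mv.2 := by
  rcases h with ⟨h1, _⟩ | ⟨ℓ, h1, _⟩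
  · omega
  · rw [h1]; exact Rf_pos ℓ

lemma rep_ex (z : ℤ) : ∃ K, Rep z K := by
  refine ⟨z.natAbs, List.replicate z.natAbs (if 0 ≤ z then (1,1) else (-1,1)), ?_, ?_, ?_⟩
  · intro mv hmv
    rw [List.eq_of_mem_replicate hmv]
    split <;> exact Or.inl ⟨rfl, by simp⟩
  · simp only [wval, List.map_replicate, List.sum_replicate]
    rcases le_or_gt 0 z with h | h
    · rw [if_pos h]
      show z.natAbs • (1 : ℤ) = z
      rw [nsmul_eq_mul]
      omega
    · rw [if_neg (by omega)]
      show z.natAbs • (-1 : ℤ) = z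
      rw [nsmul_eq_mul]
      omega
  · simp only [wcost, List.map_replicate, List.sum_replicate]
    split <;> simp

lemma gn_le {z : ℤ} {K : ℕ} (h : Rep z K) : gn z ≤ K := Nat.sInf_le h

lemma gn_rep (z : ℤ) : Rep z (gn z) := Nat.sInf_mem (rep_ex z)

lemma gn_zero : gn 0 = 0 :=
  Nat.le_zero.mp (gn_le ⟨[], by simp, rfl, rfl⟩)

lemma gn_eq_zero {z : ℤ} (h : gn z = 0) : z = 0 := by
  obtain ⟨L, hL, hv, hc⟩ := gn_rep z
  rw [h] at hc
  have : L = [] := by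
    cases L with
    | nil => rfl
    | cons mv L =>
        exfalso
        have h1 := mv_cost_pos (hL mv (by simp))
        have : wcost (mv :: L) = mv.2 + wcost L := by simp [wcost]
        omega
  subst this
  simpa [wval] using hv.symm

lemma mvLevel_neg {ℓ : ℕ} {z : ℤ} (h : z ∈ MvLevel ℓ) : -z ∈ MvLevel ℓ := by
  obtain ⟨ε, hε, rfl⟩ := h
  exact ⟨fun i => -(ε i), fun i => by simpa using hε i, by
    rw [← Finset.sum_neg_distrib]
    exact Finset.sum_congr rfl fun i _ => by ring⟩

lemma isMv_neg {mv : ℤ × ℕ} (h : IsMv mv) : IsMv (-mv.1, mv.2) := by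
  rcases h with ⟨h1, h2 | h2⟩ | ⟨ℓ, h1, h2⟩
  · exact Or.inl ⟨h1, Or.inr (by simp [h2])⟩
  · exact Or.inl ⟨h1, Or.inl (by simp [h2])⟩
  · exact Or.inr ⟨ℓ, h1, mvLevel_neg h2⟩

lemma wval_map_neg (L : List (ℤ × ℕ)) :
    wval (L.map (fun mv => (-mv.1, mv.2))) = - wval L := by
  unfold wval
  induction L with
  | nil => simp
  | cons a L ih =>
      simp only [List.map_cons, List.map_map, List.sum_cons] at ih ⊢
      omega

lemma rep_neg {z : ℤ} {K : ℕ} (h : Rep z K) : Rep (-z) K := by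
  obtain ⟨L, hL, hv, hc⟩ := h
  refine ⟨L.map (fun mv => (-mv.1, mv.2)), ?_, ?_, ?_⟩
  · intro mv hmv
    simp only [List.mem_map] at hmv
    obtain ⟨mv', hmv', rfl⟩ := hmv
    exact isMv_neg (hL mv' hmv')
  · rw [wval_map_neg, hv]
  · unfold wcost at hc ⊢
    rw [List.map_map]
    rw [← hc]
    rfl

lemma gn_neg (z : ℤ) : gn (-z) = gn z := by
  apply le_antisymm
  · exact gn_le (rep_neg (gn_rep z))
  · have := gn_le (rep_neg (gn_rep (-z)))
    simpa using this

lemma gn_add (x y : ℤ) : gn (x + y) ≤ gn x + gn y := by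
  obtain ⟨L1, h1, hv1, hc1⟩ := gn_rep x
  obtain ⟨L2, h2, hv2, hc2⟩ := gn_rep y
  apply gn_le
  refine ⟨L1 ++ L2, ?_, ?_, ?_⟩
  · intro mv hmv
    rcases List.mem_append.mp hmv with h | h
    · exact h1 mv h
    · exact h2 mv h
  · simp [wval, ← hv1, ← hv2]
  · simp [wcost, ← hc1, ← hc2]

lemma mvLevel_val_bound (ℓ : ℕ) {z : ℤ} (h : z ∈ MvLevel ℓ) : z.natAbs ≤ Rf (ℓ + 1) := by
  obtain ⟨ε, hε, hz⟩ := h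
  have habs : |z| ≤ ((SSb ℓ : ℤ) - 1) := by
    rw [hz]
    calc |∑ i ∈ Finset.range (NN ℓ), ε i * (ug ℓ i : ℤ)|
        ≤ ∑ i ∈ Finset.range (NN ℓ), |ε i * (ug ℓ i : ℤ)| :=
          Finset.abs_sum_le_sum_abs _ _
      _ ≤ ∑ i ∈ Finset.range (NN ℓ), (ug ℓ i : ℤ) := by
          apply Finset.sum_le_sum
          intro i _
          rw [abs_mul]
          calc |ε i| * |(ug ℓ i : ℤ)| ≤ 1 * |(ug ℓ i : ℤ)| :=
                mul_le_mul_of_nonneg_right (hε i) (abs_nonneg _)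
            _ = (ug ℓ i : ℤ) := by simp
      _ = (SSb ℓ : ℤ) - 1 := by rw [SSb_def]; push_cast; ring
  have h2 : (z.natAbs : ℤ) = |z| := Int.natCast_natAbs z
  have h3 : SSb ℓ ≤ Rf (ℓ + 1) := SSb_le_Rf_succ ℓ
  omega

/-- value of a single move, bounded via its cost -/
lemma mv_val_bound {mv : ℤ × ℕ} (h : IsMv mv) : mv.1.natAbs ≤ Rf (mv.2 + 1) := by
  rcases h with ⟨h1, h2⟩ | ⟨ℓ, h1, h2⟩
  · have : mv.1.natAbs = 1 := by rcases h2 with h | h <;> simp [h]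
    rw [this]
    exact Rf_pos _
  · have hv := mvLevel_val_bound ℓ h2
    have h4 : ℓ + 1 ≤ mv.2 := by rw [h1]; exact Rf_ge ℓ
    exact le_trans hv (Rf_mono (by omega))


lemma wval_bound : ∀ L : List (ℤ × ℕ), (∀ mv ∈ L, IsMv mv) →
    (wval L).natAbs ≤ wcost L * Rf (wcost L + 1) := by
  intro L
  induction L with
  | nil => simp [wval, wcost]
  | cons mv L ih =>
      intro h
      have hmv := h mv (by simp)
      have hL := ih (fun x hx => h x (List.mem_cons_of_mem _ hx))
      have h1 := mv_val_bound hmv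
      have h2 := mv_cost_pos hmv
      have hw : wval (mv :: L) = mv.1 + wval L := by simp [wval]
      have hc : wcost (mv :: L) = mv.2 + wcost L := by simp [wcost]
      have h3 : (wval (mv :: L)).natAbs ≤ mv.1.natAbs + (wval L).natAbs := by
        rw [hw]; exact Int.natAbs_add_le _ _
      have m1 : Rf (mv.2 + 1) ≤ Rf (wcost (mv :: L) + 1) := Rf_mono (by omega)
      have m2 : Rf (wcost L + 1) ≤ Rf (wcost (mv :: L) + 1) := Rf_mono (by omega)
      calc (wval (mv :: L)).natAbs ≤ mv.1.natAbs + (wval L).natAbs := h3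
        _ ≤ Rf (mv.2 + 1) + wcost L * Rf (wcost L + 1) := Nat.add_le_add h1 hL
        _ ≤ Rf (wcost (mv::L) + 1) + wcost L * Rf (wcost (mv::L) + 1) :=
            Nat.add_le_add m1 (Nat.mul_le_mul_left _ m2)
        _ ≤ mv.2 * Rf (wcost (mv::L) + 1) + wcost L * Rf (wcost (mv::L) + 1) :=
            Nat.add_le_add (Nat.le_mul_of_pos_left _ (by omega)) le_rfl
        _ = wcost (mv :: L) * Rf (wcost (mv::L) + 1) := by rw [hc]; ring

theorem word_residue (ℓ : ℕ) {i0 : ℕ} (hi0 : i0 < NN ℓ) :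
    ∀ L : List (ℤ × ℕ), (∀ mv ∈ L, IsMv mv) → wcost L < Tq ℓ →
    ∃ c : ℤ, (pp ℓ i0 : ℤ) ∣ (wval L - c) ∧ c.natAbs ≤ (W ℓ + 1) * wcost L := by
  intro L
  induction L with
  | nil => intro _ _; exact ⟨0, by simp [wval], by simp [wcost]⟩
  | cons mv L ih =>
      intro hall hcost
      have hw : wval (mv :: L) = mv.1 + wval L := by simp [wval]
      have hc : wcost (mv :: L) = mv.2 + wcost L := by simp [wcost]
      have hcost' : wcost L < Tq ℓ := by omega
      obtain ⟨c, hdvd, hb⟩ := ih (fun x hx => hall x (List.mem_cons_of_mem _ hx)) hcost'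
      have hmv := hall mv (by simp)
      rcases hmv with ⟨h1, h2⟩ | ⟨ℓ', h1, hlev⟩
      · refine ⟨c + mv.1, ?_, ?_⟩
        · have heq : wval (mv :: L) - (c + mv.1) = wval L - c := by rw [hw]; ring
          rw [heq]; exact hdvd
        · have hn : mv.1.natAbs = 1 := by rcases h2 with h | h <;> simp [h]
          calc (c + mv.1).natAbs ≤ c.natAbs + mv.1.natAbs := Int.natAbs_add_le _ _
            _ ≤ (W ℓ + 1) * wcost L + 1 := by omega
            _ ≤ (W ℓ + 1) * wcost (mv :: L) := by rw [hc, h1]; nlinarith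
      · rcases Nat.lt_trichotomy ℓ' ℓ with hlt | heq | hgt
        · refine ⟨c + mv.1, ?_, ?_⟩
          · have heq2 : wval (mv :: L) - (c + mv.1) = wval L - c := by rw [hw]; ring
            rw [heq2]; exact hdvd
          · have hv : mv.1.natAbs ≤ Rf (ℓ' + 1) := mvLevel_val_bound ℓ' hlev
            have hv2 : Rf (ℓ' + 1) ≤ W ℓ := Rf_mono (Nat.succ_le_of_lt hlt)
            have hcpos : 1 ≤ mv.2 := mv_cost_pos (Or.inr ⟨ℓ', h1, hlev⟩)
            calc (c + mv.1).natAbs ≤ c.natAbs + mv.1.natAbs := Int.natAbs_add_le _ _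
              _ ≤ (W ℓ + 1) * wcost L + W ℓ := by omega
              _ ≤ (W ℓ + 1) * wcost (mv :: L) := by rw [hc]; nlinarith
        · rw [heq] at h1 hlev
          obtain ⟨ε, hε, hz⟩ := hlev
          refine ⟨c + ε i0, ?_, ?_⟩
          · have key : (pp ℓ i0 : ℤ) ∣ mv.1 - ε i0 := by
              rw [hz]
              have hsplit : ∑ i ∈ Finset.range (NN ℓ), ε i * (ug ℓ i : ℤ)
                  = ε i0 * (ug ℓ i0 : ℤ)
                    + ∑ i ∈ (Finset.range (NN ℓ)).erase i0, ε i * (ug ℓ i : ℤ) := by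
                exact (Finset.add_sum_erase _ _ (Finset.mem_range.mpr hi0)).symm
              rw [hsplit]
              have d1 : (pp ℓ i0 : ℤ) ∣ ε i0 * (ug ℓ i0 : ℤ) - ε i0 := by
                have heq3 : ε i0 * (ug ℓ i0 : ℤ) - ε i0 = ((ug ℓ i0 : ℤ) - 1) * ε i0 := by ring
                rw [heq3]
                exact Dvd.dvd.mul_right (uu_one ℓ i0) _
              have d2 : (pp ℓ i0 : ℤ) ∣
                  ∑ i ∈ (Finset.range (NN ℓ)).erase i0, ε i * (ug ℓ i : ℤ) := by
                apply Finset.dvd_sum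
                intro j hj
                have hj1 := Finset.mem_erase.mp hj
                exact Dvd.dvd.mul_left (uu_zero ℓ hi0 (Ne.symm hj1.1)) _
              have heq4 : ε i0 * (ug ℓ i0 : ℤ)
                    + (∑ i ∈ (Finset.range (NN ℓ)).erase i0, ε i * (ug ℓ i : ℤ)) - ε i0
                  = (ε i0 * (ug ℓ i0 : ℤ) - ε i0)
                    + ∑ i ∈ (Finset.range (NN ℓ)).erase i0, ε i * (ug ℓ i : ℤ) := by ring
              rw [heq4]
              exact dvd_add d1 d2
            have heq5 : wval (mv :: L) - (c + ε i0) = (mv.1 - ε i0) + (wval L - c) := by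
              rw [hw]; ring
            rw [heq5]
            exact dvd_add key hdvd
          · have hεb := hε i0
            have hna : (ε i0).natAbs ≤ 1 := by
              have := Int.natCast_natAbs (ε i0); omega
            have hWpos : 1 ≤ W ℓ := Rf_pos ℓ
            calc (c + ε i0).natAbs ≤ c.natAbs + (ε i0).natAbs := Int.natAbs_add_le _ _
              _ ≤ (W ℓ + 1) * wcost L + 1 := by omega
              _ ≤ (W ℓ + 1) * wcost (mv :: L) := by rw [hc, h1]; nlinarith
        · exfalso
          have hle := later_expensive' ℓ ℓ' hgt
          have : Tq ℓ < mv.2 := by rw [h1]; omega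
          omega

theorem gn_lower (ℓ : ℕ) {i0 : ℕ} (hi0 : i0 < NN ℓ) {z : ℤ}
    (hz : (pp ℓ i0 : ℤ) ∣ (z - (Lam ℓ : ℤ))) : Tq ℓ ≤ gn z := by
  by_contra hlt
  push_neg at hlt
  obtain ⟨L, hall, hv, hc⟩ := gn_rep z
  obtain ⟨c, hdvd, hb⟩ := word_residue ℓ hi0 L hall (by omega)
  rw [hv] at hdvd
  have hdd : (pp ℓ i0 : ℤ) ∣ (c - (Lam ℓ : ℤ)) := by
    have heq : (c - (Lam ℓ : ℤ)) = (z - Lam ℓ) - (z - c) := by ring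
    rw [heq]; exact dvd_sub hz hdvd
  have hTb : wcost L ≤ Tq ℓ - 1 := by omega
  have h1 : c.natAbs ≤ (W ℓ + 1) * (Tq ℓ - 1) :=
    le_trans hb (Nat.mul_le_mul_left _ hTb)
  have h2 := pp_ge ℓ i0
  have h3 : (c.natAbs : ℤ) = |c| := Int.natCast_natAbs c
  have h4 : 1 ≤ W ℓ := Rf_pos ℓ
  have h5 : 2 ≤ Tq ℓ := Tq_pos ℓ
  have hLam : (Lam ℓ : ℤ) = ((W ℓ : ℤ) + 1) * (Tq ℓ : ℤ) + 1 := by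
    rw [Lam_eq ℓ]; push_cast; ring
  have h1' : |c| ≤ ((W ℓ : ℤ) + 1) * ((Tq ℓ : ℤ) - 1) := by
    rw [← h3]
    calc (c.natAbs : ℤ) ≤ (((W ℓ + 1) * (Tq ℓ - 1) : ℕ) : ℤ) := by exact_mod_cast h1
      _ = ((W ℓ : ℤ) + 1) * ((Tq ℓ : ℤ) - 1) := by push_cast [Nat.cast_sub (by omega : 1 ≤ Tq ℓ)]; ring
  have habs : |c - (Lam ℓ : ℤ)| < (pp ℓ i0 : ℤ) := by
    have hp : (2 * (Lam ℓ + 1) + 2 : ℤ) ≤ (pp ℓ i0 : ℤ) := by exact_mod_cast h2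
    have htri : |c - (Lam ℓ : ℤ)| ≤ |c| + (Lam ℓ : ℤ) := by
      calc |c - (Lam ℓ : ℤ)| ≤ |c| + |(Lam ℓ : ℤ)| := abs_sub _ _
        _ = |c| + (Lam ℓ : ℤ) := by rw [Int.abs_natCast]
    have hWc : (0:ℤ) ≤ (W ℓ : ℤ) := by positivity
    nlinarith
  have hzero : c - (Lam ℓ : ℤ) = 0 := Int.eq_zero_of_abs_lt_dvd hdd habs
  have hcL : c = (Lam ℓ : ℤ) := by omega
  rw [hcL] at h1'
  rw [Int.abs_natCast] at h1'
  nlinarith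

/-! ### The embedding of the Hales-Jewett cube -/

noncomputable def vv (ℓ : ℕ) (v : Fin (NN ℓ) → Fin (Lam ℓ + 1)) (i : ℕ) : ℤ :=
  if h : i < NN ℓ then ((v ⟨i, h⟩ : ℕ) : ℤ) else 0

noncomputable def emb (ℓ : ℕ) (v : Fin (NN ℓ) → Fin (Lam ℓ + 1)) : ℤ :=
  ∑ i ∈ Finset.range (NN ℓ), vv ℓ v i * (ug ℓ i : ℤ)

lemma emb_line_sub (ℓ : ℕ) (l : Line (Fin (Lam ℓ + 1)) (Fin (NN ℓ)))
    (x y : Fin (Lam ℓ + 1)) :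
    emb ℓ (l x) - emb ℓ (l y) = ∑ i ∈ Finset.range (NN ℓ),
      (if h : i < NN ℓ then (if l.idxFun ⟨i, h⟩ = none then ((x : ℕ) : ℤ) - ((y : ℕ) : ℤ) else 0)
        else 0) * (ug ℓ i : ℤ) := by
  unfold emb
  rw [← Finset.sum_sub_distrib]
  apply Finset.sum_congr rfl
  intro i hi
  have hlt : i < NN ℓ := Finset.mem_range.mp hi
  rw [dif_pos hlt]
  unfold vv
  rw [dif_pos hlt, dif_pos hlt]
  rcases h : l.idxFun ⟨i, hlt⟩ with _ | a
  · rw [if_pos rfl]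
    have h1 : l x ⟨i, hlt⟩ = x := l.apply_none x _ h
    have h2 : l y ⟨i, hlt⟩ = y := l.apply_none y _ h
    rw [h1, h2]
    ring
  · rw [if_neg (by simp)]
    have h1 : l x ⟨i, hlt⟩ = a := Line.apply_some h
    have h2 : l y ⟨i, hlt⟩ = a := Line.apply_some h
    rw [h1, h2]
    ring

lemma gn_step (ℓ : ℕ) (l : Line (Fin (Lam ℓ + 1)) (Fin (NN ℓ))) (t : Fin (Lam ℓ)) :
    gn (emb ℓ (l t.succ) - emb ℓ (l t.castSucc)) ≤ W ℓ := by
  apply gn_le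
  refine ⟨[(emb ℓ (l t.succ) - emb ℓ (l t.castSucc), W ℓ)], ?_, by simp [wval], by simp [wcost]⟩
  intro mv hmv
  simp only [List.mem_singleton] at hmv
  subst hmv
  refine Or.inr ⟨ℓ, rfl, ?_⟩
  refine ⟨fun i => if h : i < NN ℓ then (if l.idxFun ⟨i, h⟩ = none then 1 else 0) else 0, ?_, ?_⟩
  · intro i
    dsimp only
    split <;> try split
    all_goals norm_num
  · dsimp only
    rw [emb_line_sub]
    apply Finset.sum_congr rfl
    intro i hi
    have hlt : i < NN ℓ := Finset.mem_range.mp hi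
    rw [dif_pos hlt, dif_pos hlt]
    congr 1
    split
    · rw [Fin.val_succ, Fin.coe_castSucc]
      push_cast
      ring
    · rfl

lemma emb_endpoint (ℓ : ℕ) (l : Line (Fin (Lam ℓ + 1)) (Fin (NN ℓ)))
    {i0 : Fin (NN ℓ)} (h0 : l.idxFun i0 = none) :
    (pp ℓ (i0 : ℕ) : ℤ) ∣
      (emb ℓ (l (Fin.last (Lam ℓ))) - emb ℓ (l 0) - (Lam ℓ : ℤ)) := by
  rw [emb_line_sub]
  have hi0 : (i0 : ℕ) ∈ Finset.range (NN ℓ) := Finset.mem_range.mpr i0.isLt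
  rw [← Finset.add_sum_erase _ _ hi0]
  have hterm : (if h : (i0 : ℕ) < NN ℓ then
      (if l.idxFun ⟨(i0 : ℕ), h⟩ = none then (((Fin.last (Lam ℓ) : ℕ) : ℤ)) - (((0 : Fin (Lam ℓ + 1)) : ℕ) : ℤ) else 0)
        else 0) * (ug ℓ (i0 : ℕ) : ℤ) = (Lam ℓ : ℤ) * (ug ℓ (i0 : ℕ) : ℤ) := by
    rw [dif_pos i0.isLt]
    rw [if_pos (by rwa [Fin.eta])]
    norm_num
  rw [hterm]
  have hsplit : (Lam ℓ : ℤ) * (ug ℓ (i0 : ℕ) : ℤ)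
      + (∑ i ∈ (Finset.range (NN ℓ)).erase (i0 : ℕ),
        (if h : i < NN ℓ then (if l.idxFun ⟨i, h⟩ = none then (((Fin.last (Lam ℓ) : ℕ) : ℤ)) - (((0 : Fin (Lam ℓ + 1)) : ℕ) : ℤ) else 0) else 0) * (ug ℓ i : ℤ))
      - (Lam ℓ : ℤ)
      = (Lam ℓ : ℤ) * ((ug ℓ (i0 : ℕ) : ℤ) - 1)
      + (∑ i ∈ (Finset.range (NN ℓ)).erase (i0 : ℕ),
        (if h : i < NN ℓ then (if l.idxFun ⟨i, h⟩ = none then (((Fin.last (Lam ℓ) : ℕ) : ℤ)) - (((0 : Fin (Lam ℓ + 1)) : ℕ) : ℤ) else 0) else 0) * (ug ℓ i : ℤ)) := by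
    ring
  rw [hsplit]
  apply dvd_add
  · exact Dvd.dvd.mul_left (uu_one ℓ (i0 : ℕ)) _
  · apply Finset.dvd_sum
    intro j hj
    have hj1 := Finset.mem_erase.mp hj
    exact Dvd.dvd.mul_left (uu_zero ℓ i0.isLt (Ne.symm hj1.1)) _

/-! ### The level lemma -/

theorem level_defeat (ℓ : ℕ) (C k : ℝ) (hq : C + |k| ≤ (qual ℓ : ℝ))
    (U : Fin (mcol ℓ) → Set ℤ) (hcov : ∀ x : ℤ, ∃ i, x ∈ U i)
    (hbd : ∀ i x y, ScaleChain dZ ((W ℓ : ℝ) + 1) (U i) x y →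
      dZ x y ≤ C * ((W ℓ : ℝ) + 1) + k) : False := by
  classical
  choose pick hpick using hcov
  set s : ℝ := (W ℓ : ℝ) + 1 with hs
  obtain ⟨l, col, hl⟩ := HJ_level ℓ (fun v => pick (emb ℓ v))
  have hmem : ∀ x : Fin (Lam ℓ + 1), emb ℓ (l x) ∈ U col := by
    intro x
    have h2 := hpick (emb ℓ (l x))
    rwa [show pick (emb ℓ (l x)) = col from hl x] at h2
  have hchain : ScaleChain dZ s (U col) (emb ℓ (l 0)) (emb ℓ (l (Fin.last (Lam ℓ)))) := by
    refine ⟨Lam ℓ, fun t => emb ℓ (l t), fun t => hmem t, rfl, rfl, ?_⟩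
    intro t
    show dZ (emb ℓ (l t.castSucc)) (emb ℓ (l t.succ)) < s
    unfold dZ
    rw [show emb ℓ (l t.castSucc) - emb ℓ (l t.succ)
        = -(emb ℓ (l t.succ) - emb ℓ (l t.castSucc)) by ring, gn_neg]
    have := gn_step ℓ l t
    have hcast : (gn (emb ℓ (l t.succ) - emb ℓ (l t.castSucc)) : ℝ) ≤ (W ℓ : ℝ) := by
      exact_mod_cast this
    rw [hs]
    linarith
  have hfar := hbd col _ _ hchain
  set i0 : Fin (NN ℓ) := l.proper.choose with hi0def
  have h0 : l.idxFun i0 = none := l.proper.choose_spec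
  have hdvd := emb_endpoint ℓ l h0
  have hT : Tq ℓ ≤ gn (emb ℓ (l (Fin.last (Lam ℓ))) - emb ℓ (l 0)) :=
    gn_lower ℓ i0.isLt (by exact_mod_cast hdvd)
  have hdeq : dZ (emb ℓ (l 0)) (emb ℓ (l (Fin.last (Lam ℓ))))
      = (gn (emb ℓ (l (Fin.last (Lam ℓ))) - emb ℓ (l 0)) : ℝ) := by
    unfold dZ
    rw [show emb ℓ (l 0) - emb ℓ (l (Fin.last (Lam ℓ)))
        = -(emb ℓ (l (Fin.last (Lam ℓ))) - emb ℓ (l 0)) by ring, gn_neg]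
  have hs1 : (1 : ℝ) ≤ s := by
    rw [hs]
    have : (0:ℝ) ≤ (W ℓ : ℝ) := Nat.cast_nonneg _
    linarith
  have hs0 : (0 : ℝ) < s := by linarith
  have hk : C * s + k ≤ (C + |k|) * s := by
    nlinarith [le_abs_self k, abs_nonneg k]
  have h2 : (C + |k|) * s ≤ (qual ℓ : ℝ) * s := mul_le_mul_of_nonneg_right hq (by linarith)
  have h3 : (qual ℓ : ℝ) * s < ((qual ℓ : ℝ) + 1) * s := by nlinarith
  have hTeq : ((Tq ℓ : ℕ) : ℝ) = ((qual ℓ : ℝ) + 1) * s := by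
    rw [hs, Tq_eq ℓ]
    push_cast
    ring
  have hTreal : ((Tq ℓ : ℕ) : ℝ) ≤ dZ (emb ℓ (l 0)) (emb ℓ (l (Fin.last (Lam ℓ)))) := by
    rw [hdeq]
    exact_mod_cast hT
  linarith


theorem dZ_metric : IsProperInvMetricZ dZ := by
  refine ⟨?_, ?_, ?_, ?_, ?_⟩
  · intro x y
    unfold dZ
    constructor
    · intro h
      have h1 : gn (x - y) = 0 := by exact_mod_cast h
      have := gn_eq_zero h1
      omega
    · rintro rfl
      rw [sub_self, gn_zero]
      norm_num
  · intro x y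
    unfold dZ
    rw [show x - y = -(y - x) by ring, gn_neg]
  · intro x y z
    unfold dZ
    have h := gn_add (x - y) (y - z)
    rw [show x - y + (y - z) = x - z by ring] at h
    exact_mod_cast h
  · intro a x y
    unfold dZ
    rw [show a + x - (a + y) = x - y by ring]
  · intro K
    apply Set.Finite.subset (Set.finite_Icc (-((⌊K⌋₊ * Rf (⌊K⌋₊ + 1) : ℕ) : ℤ))
      ((⌊K⌋₊ * Rf (⌊K⌋₊ + 1) : ℕ) : ℤ))
    intro n hn
    simp only [Set.mem_setOf_eq] at hn
    have h1 : gn (0 - n) ≤ ⌊K⌋₊ := Nat.le_floor hn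
    obtain ⟨L, hall, hv, hc⟩ := gn_rep (0 - n)
    have h2 := wval_bound L hall
    rw [hv, hc] at h2
    have h3 : (0 - n).natAbs ≤ ⌊K⌋₊ * Rf (⌊K⌋₊ + 1) :=
      le_trans h2 (Nat.mul_le_mul h1 (Rf_mono (by omega)))
    simp only [Set.mem_Icc]
    omega

theorem dZ_asdim : ∀ n : ℕ, ¬ ASDimANLe dZ n := by
  intro n hAS
  obtain ⟨C, hC, k, hU⟩ := hAS
  set qq : ℕ := ⌈C + |k|⌉₊ with hqq
  set ℓ : ℕ := Nat.pair n qq with hℓ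
  have hm : mcol ℓ = n + 1 := by rw [mcol_def, hℓ, Nat.unpair_pair]
  have hq : qual ℓ = qq := by rw [qual_def, hℓ, Nat.unpair_pair]
  obtain ⟨U, hcov, hbd⟩ := hU ((W ℓ : ℝ) + 1) (by positivity)
  apply level_defeat ℓ C k ?_ (fun i => U (Fin.cast hm i)) ?_ ?_
  · rw [hq]
    calc C + |k| ≤ (⌈C + |k|⌉₊ : ℝ) := Nat.le_ceil _
      _ = (qq : ℝ) := by rw [hqq]
  · intro x
    obtain ⟨i, hi⟩ := hcov x
    exact ⟨Fin.cast hm.symm i, hi⟩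
  · intro i x y hch
    exact hbd (Fin.cast hm i) x y hch


end ZMet

/-- There is a proper (translation-)invariant metric on `ℤ` of infinite
asymptotic Assouad-Nagata dimension; in particular its Assouad-Nagata dimension
is not `1`. -/
theorem exists_metric_on_Z_infinite_asdimAN :
    ∃ d : ℤ → ℤ → ℝ, IsProperInvMetricZ d ∧ (∀ n : ℕ, ¬ ASDimANLe d n) ∧
      ¬ ASDimANLe d 1 :=
  ⟨ZMet.dZ, ZMet.dZ_metric, ZMet.dZ_asdim, ZMet.dZ_asdim 1⟩
end
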